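/- arXiv:2408.12051 — 8 statements merged into one kernel-verified Lean document; each statement's English description precedes it below -/
import Mathlib

section
/- The map ε : ℝ → (0,1), ε(y) = 1/√(eʸ + 1), is a group isomorphism from (ℝ, +) to ((0,1), ⋆). -/
/-- The scalar star operation `p ⋆ q = pq / √(p²q² + (1-p²)(1-q²))`. -/
noncomputable def sstar (p q : ℝ) : ℝ :=
  p * q / Real.sqrt (p ^ 2 * q ^ 2 + (1 - p ^ 2) * (1 - q ^ 2))

/-- The map `ε : ℝ → (0,1)`, `ε(y) = 1/√(eʸ + 1)`, is a group isomorphism from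
`(ℝ,+)` onto `((0,1), ⋆)`: it lands in `(0,1)`, is injective, surjective onto
`(0,1)`, and turns addition into `⋆`. -/
theorem stmt_5 :
    (∀ y : ℝ, 1 / Real.sqrt (Real.exp y + 1) ∈ Set.Ioo (0:ℝ) 1) ∧
    Function.Injective (fun y : ℝ => 1 / Real.sqrt (Real.exp y + 1)) ∧
    (∀ p : ℝ, p ∈ Set.Ioo (0:ℝ) 1 → ∃ y : ℝ, 1 / Real.sqrt (Real.exp y + 1) = p) ∧
    (∀ x y : ℝ, 1 / Real.sqrt (Real.exp (x + y) + 1)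
      = sstar (1 / Real.sqrt (Real.exp x + 1)) (1 / Real.sqrt (Real.exp y + 1))) := by
  have hpos : ∀ y : ℝ, (0:ℝ) < Real.exp y + 1 := fun y => by positivity
  have hs : ∀ y : ℝ, (0:ℝ) < Real.sqrt (Real.exp y + 1) := fun y =>
    Real.sqrt_pos.mpr (hpos y)
  refine ⟨?_, ?_, ?_, ?_⟩
  · intro y
    have h := Real.exp_pos y
    refine ⟨by positivity, ?_⟩
    rw [div_lt_one (hs y)]
    calc (1:ℝ) = Real.sqrt 1 := Real.sqrt_one.symm
      _ < Real.sqrt (Real.exp y + 1) := Real.sqrt_lt_sqrt (by norm_num) (by linarith)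
  · intro a b hab
    simp only at hab
    have := (hs a).ne'
    have := (hs b).ne'
    field_simp at hab
    have h2 := hab.symm
    rw [Real.sqrt_inj (hpos a).le (hpos b).le] at h2
    exact Real.exp_injective (by linarith)
  · rintro p ⟨hp0, hp1⟩
    refine ⟨Real.log (1 / p ^ 2 - 1), ?_⟩
    have hp2 : p ^ 2 < 1 := by nlinarith
    have hgt : (0:ℝ) < 1 / p ^ 2 - 1 := by
      rw [sub_pos, lt_div_iff₀ (by positivity)]; linarith
    rw [Real.exp_log hgt]
    have : 1 / p ^ 2 - 1 + 1 = (1 / p) ^ 2 := by field_simp; ring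
    rw [this, Real.sqrt_sq (by positivity)]
    field_simp
  · intro x y
    have hx := Real.exp_pos x
    have hy := Real.exp_pos y
    have hsx := hs x
    have hsy := hs y
    have hsxy := hs (x + y)
    have hpx : (1 / Real.sqrt (Real.exp x + 1)) ^ 2 = 1 / (Real.exp x + 1) := by
      rw [div_pow, one_pow, Real.sq_sqrt (hpos x).le]
    have hpy : (1 / Real.sqrt (Real.exp y + 1)) ^ 2 = 1 / (Real.exp y + 1) := by
      rw [div_pow, one_pow, Real.sq_sqrt (hpos y).le]
    unfold sstar
    rw [hpx, hpy]
    have hinner : 1 / (Real.exp x + 1) * (1 / (Real.exp y + 1)) +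
        (1 - 1 / (Real.exp x + 1)) * (1 - 1 / (Real.exp y + 1))
        = (Real.exp (x + y) + 1) / ((Real.exp x + 1) * (Real.exp y + 1)) := by
      rw [Real.exp_add]
      field_simp
      ring
    rw [hinner, Real.sqrt_div' _ (by positivity), Real.sqrt_mul (hpos x).le]
    field_simp
end

section
/- For positive contractions P, Q on finite-dimensional Hilbert spaces satisfying the kernel condition, one has 0 ≤ P ⋆ Q ≤ id. -/
open Matrix Kronecker
open scoped ComplexOrder

section Aux

variable {k : Type*} [Fintype k] [DecidableEq k]

open scoped MatrixOrder

private lemma posSemidef_iff_eq_transpose_mul_self {a : Type*} [Fintype a] [DecidableEq a] {A : Matrix a a ℂ} :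
    A.PosSemidef ↔ ∃ B : Matrix a a ℂ, A = Bᴴ * B := by
  refine ⟨fun hA => ?_, fun ⟨B, hB⟩ => hB ▸ posSemidef_conjTranspose_mul_self B⟩
  obtain ⟨B, hB⟩ := CStarAlgebra.nonneg_iff_eq_star_mul_self.mp hA.nonneg
  exact ⟨B, hB⟩

noncomputable def Matrix.PosSemidef.sqrt {A : Matrix k k ℂ} (_hA : A.PosSemidef) :
    Matrix k k ℂ := CFC.sqrt A

lemma Matrix.PosSemidef.posSemidef_sqrt {A : Matrix k k ℂ} (hA : A.PosSemidef) :
    hA.sqrt.PosSemidef := Matrix.nonneg_iff_posSemidef.mp (CFC.sqrt_nonneg A)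

lemma Matrix.PosSemidef.sqrt_mul_self {A : Matrix k k ℂ} (hA : A.PosSemidef) :
    hA.sqrt * hA.sqrt = A := CFC.sqrt_mul_sqrt_self A hA.nonneg

private lemma aux_kron_conjTranspose {a b : Type*} (A : Matrix a a ℂ) (B : Matrix b b ℂ) :
    (A ⊗ₖ B)ᴴ = Aᴴ ⊗ₖ Bᴴ := by
  ext ⟨i, j⟩ ⟨i', j'⟩
  simp [conjTranspose_apply, kroneckerMap_apply]

private lemma aux_kron_psd {a b : Type*} [Fintype a] [Fintype b] [DecidableEq a] [DecidableEq b]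
    {A : Matrix a a ℂ} {B : Matrix b b ℂ} (hA : A.PosSemidef) (hB : B.PosSemidef) :
    (A ⊗ₖ B).PosSemidef := by
  obtain ⟨M, rfl⟩ := posSemidef_iff_eq_transpose_mul_self.mp hA
  obtain ⟨N, rfl⟩ := posSemidef_iff_eq_transpose_mul_self.mp hB
  rw [Matrix.mul_kronecker_mul, ← aux_kron_conjTranspose]
  exact posSemidef_conjTranspose_mul_self _

private lemma aux_trace_nonneg {M : Matrix k k ℂ} (hM : M.PosSemidef) : 0 ≤ M.trace := by
  rw [Matrix.trace]
  refine Finset.sum_nonneg fun i _ => ?_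
  have h := hM.dotProduct_mulVec_nonneg (Pi.single i 1)
  simpa [Matrix.mulVec_single, dotProduct, Pi.single_apply] using h

private lemma aux_trace_mul_nonneg {M N : Matrix k k ℂ} (hM : M.PosSemidef) (hN : N.PosSemidef) :
    0 ≤ (M * N).trace := by
  obtain ⟨B, rfl⟩ := posSemidef_iff_eq_transpose_mul_self.mp hM
  rw [mul_assoc, Matrix.trace_mul_comm]
  exact aux_trace_nonneg (hN.mul_mul_conjTranspose_same B)

private lemma aux_trace_conj_eq_sum (R S : Matrix k k ℂ) :
    (Sᴴ * R * S).trace = ∑ j, star (fun i => S i j) ⬝ᵥ R *ᵥ (fun i => S i j) := by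
  simp only [Matrix.trace, Matrix.diag, Matrix.mul_apply, conjTranspose_apply, dotProduct,
    Matrix.mulVec, Pi.star_apply, Finset.mul_sum, Finset.sum_mul]
  refine Finset.sum_congr rfl fun j _ => ?_
  rw [Finset.sum_comm]
  refine Finset.sum_congr rfl fun a _ => Finset.sum_congr rfl fun b _ => ?_
  ring

private lemma aux_posDef_of_isUnit {M : Matrix k k ℂ} (hM : M.PosSemidef) (h : IsUnit M) :
    M.PosDef := by
  refine Matrix.PosDef.of_dotProduct_mulVec_pos hM.isHermitian fun x hx =>
    (hM.dotProduct_mulVec_nonneg x).lt_of_ne fun h0 => hx ?_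
  have hx0 : M *ᵥ x = 0 := (hM.dotProduct_mulVec_zero_iff x).mp h0.symm
  have hinj : Function.Injective (M.mulVec) := Matrix.mulVec_injective_iff_isUnit.mpr h
  exact hinj (by simpa using hx0)

private lemma aux_commute_of_commute_sq {A R : Matrix k k ℂ} (hR : R.PosDef)
    (h : A * (R * R) = (R * R) * A) : A * R = R * A := by
  set S := A * R - R * A with hS
  have key : R * S + S * R = 0 := by
    have e : R * S + S * R = A * (R * R) - (R * R) * A := by rw [hS]; noncomm_ring
    rw [e, h, sub_self]
  have hsum : (Sᴴ * R * S).trace + (Sᴴ * S * R).trace = 0 := by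
    rw [mul_assoc Sᴴ R S, mul_assoc Sᴴ S R, ← Matrix.trace_add, ← Matrix.mul_add, key,
      Matrix.mul_zero, Matrix.trace_zero]
  have h1 : 0 ≤ (Sᴴ * R * S).trace := aux_trace_nonneg (hR.posSemidef.conjTranspose_mul_mul_same S)
  have h2 : 0 ≤ (Sᴴ * S * R).trace :=
    aux_trace_mul_nonneg (posSemidef_conjTranspose_mul_self S) hR.posSemidef
  have h10 : (Sᴴ * R * S).trace = 0 := by
    refine le_antisymm ?_ h1
    rw [eq_neg_of_add_eq_zero_left hsum]
    exact neg_nonpos.mpr h2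
  rw [aux_trace_conj_eq_sum] at h10
  have hcols : ∀ j ∈ Finset.univ, star (fun i => S i j) ⬝ᵥ R *ᵥ (fun i => S i j) = 0 :=
    (Finset.sum_eq_zero_iff_of_nonneg fun j _ => hR.posSemidef.dotProduct_mulVec_nonneg _).mp h10
  have hS0 : S = 0 := by
    ext i j
    by_contra hne
    have hcol : (fun i => S i j) ≠ 0 := fun hcol => hne (by simpa using congrFun hcol i)
    exact (hR.dotProduct_mulVec_pos hcol).ne' (hcols j (Finset.mem_univ j))
  have := sub_eq_zero.mp hS0
  exact this

private lemma aux_one_sub_sq_psd {A : Matrix k k ℂ} (hA : A.PosSemidef)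
    (hA1 : (1 - A).PosSemidef) : (1 - A * A).PosSemidef := by
  have hs := hA.posSemidef_sqrt
  obtain ⟨W, hWps, hWW⟩ : ∃ W : Matrix k k ℂ, W.PosSemidef ∧ W * W = A :=
    ⟨hA.sqrt, hA.posSemidef_sqrt, hA.sqrt_mul_self⟩
  have hcomm : W * A * W = A * A := by rw [← hWW]; noncomm_ring
  have key : (1 : Matrix k k ℂ) - A * A = (1 - A) + W * (1 - A) * Wᴴ := by
    rw [hWps.isHermitian.eq, Matrix.mul_sub, Matrix.sub_mul, Matrix.mul_one, hWW, hcomm]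
    noncomm_ring
  rw [key]
  exact hA1.add (hA1.mul_mul_conjTranspose_same W)

private lemma aux_sqrt_posDef {M : Matrix k k ℂ} (hM : M.PosDef) :
    hM.posSemidef.sqrt.PosDef := by
  refine aux_posDef_of_isUnit hM.posSemidef.posSemidef_sqrt ?_
  have hd : IsUnit (hM.posSemidef.sqrt.det * hM.posSemidef.sqrt.det) := by
    rw [← Matrix.det_mul, hM.posSemidef.sqrt_mul_self]
    exact hM.det_pos.ne'.isUnit
  exact (Matrix.isUnit_iff_isUnit_det _).2 (isUnit_of_mul_isUnit_left hd)

private lemma aux_commute_sqrt {M N : Matrix k k ℂ} (hM : M.PosDef)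
    (h : N * M = M * N) : N * hM.posSemidef.sqrt = hM.posSemidef.sqrt * N :=
  aux_commute_of_commute_sq (aux_sqrt_posDef hM)
    (by rw [hM.posSemidef.sqrt_mul_self]; exact h)

private lemma aux_commute_inv {M N : Matrix k k ℂ} (hM : IsUnit M)
    (h : N * M = M * N) : N * M⁻¹ = M⁻¹ * N := by
  have hd : IsUnit M.det := (Matrix.isUnit_iff_isUnit_det _).mp hM
  have h1 : M * (N * M⁻¹) = N := by
    rw [← mul_assoc, ← h, mul_assoc, Matrix.mul_nonsing_inv _ hd, mul_one]
  calc N * M⁻¹ = M⁻¹ * (M * (N * M⁻¹)) := by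
        rw [← mul_assoc, Matrix.nonsing_inv_mul _ hd, one_mul]
    _ = M⁻¹ * N := by rw [h1]

private lemma aux_posSemidef_mul_of_commute {M N : Matrix k k ℂ} (hM : M.PosDef)
    (hN : N.PosSemidef) (hc : M * N = N * M) : (M * N).PosSemidef := by
  have hWpd := aux_sqrt_posDef hM
  have hNW : N * hM.posSemidef.sqrt = hM.posSemidef.sqrt * N := aux_commute_sqrt hM hc.symm
  obtain ⟨W, hWherm, hNW', hWW⟩ :
      ∃ W : Matrix k k ℂ, W.IsHermitian ∧ N * W = W * N ∧ W * W = M :=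
    ⟨hM.posSemidef.sqrt, hWpd.isHermitian, hNW, hM.posSemidef.sqrt_mul_self⟩
  have key : M * N = W * N * Wᴴ := by
    rw [hWherm.eq, ← hWW, mul_assoc W N W, hNW', ← mul_assoc]
  rw [key]
  exact hN.mul_mul_conjTranspose_same _

end Aux

/-- For positive contractions `P, Q` on finite-dimensional Hilbert spaces
satisfying the kernel condition, one has `0 ≤ P ⋆ Q ≤ id`, where
`P ⋆ Q = (P ⊗ Q)(P² ⊗ Q² + (id−P²) ⊗ (id−Q²))^{-1/2}`. -/
theorem stmt_11 {m n : ℕ} (P : Matrix (Fin m) (Fin m) ℂ) (Q : Matrix (Fin n) (Fin n) ℂ)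
    (hP : P.PosSemidef) (hP1 : (1 - P).PosSemidef)
    (hQ : Q.PosSemidef) (hQ1 : (1 - Q).PosSemidef)
    (hker : ∀ v : Fin m × Fin n → ℂ,
      (P ⊗ₖ Q).mulVec v = 0 → ((1 - P) ⊗ₖ (1 - Q)).mulVec v = 0 → v = 0)
    (R : Matrix (Fin m × Fin n) (Fin m × Fin n) ℂ)
    (hR1 : R.PosSemidef)
    (hR2 : R * R = (P * P) ⊗ₖ (Q * Q) + (1 - P * P) ⊗ₖ (1 - Q * Q)) :
    ((P ⊗ₖ Q) * R⁻¹).PosSemidef ∧ (1 - (P ⊗ₖ Q) * R⁻¹).PosSemidef := by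
  set A := P ⊗ₖ Q with hAdef
  set C := (1 - P * P) ⊗ₖ (1 - Q * Q) with hCdef
  set D := (1 - P) ⊗ₖ (1 - Q) with hDdef
  set T := (1 + P) ⊗ₖ (1 + Q) with hTdef
  have hA : A.PosSemidef := aux_kron_psd hP hQ
  have hC : C.PosSemidef := aux_kron_psd (aux_one_sub_sq_psd hP hP1) (aux_one_sub_sq_psd hQ hQ1)
  have hR2' : R * R = A * A + C := by rw [hR2, hAdef, Matrix.mul_kronecker_mul]
  have ePc : P * (1 - P * P) = (1 - P * P) * P := by noncomm_ring
  have eQc : Q * (1 - Q * Q) = (1 - Q * Q) * Q := by noncomm_ring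
  have hAC : A * C = C * A := by
    rw [hAdef, hCdef, ← Matrix.mul_kronecker_mul, ← Matrix.mul_kronecker_mul, ePc, eQc]
  have hARR : A * (R * R) = (R * R) * A := by
    rw [hR2', mul_add, add_mul, hAC, ← mul_assoc]
  have hAA : (A * A).PosSemidef := by rw [← pow_two]; exact hA.pow 2
  have hRpd : R.PosDef := by
    refine Matrix.PosDef.of_dotProduct_mulVec_pos hR1.isHermitian fun x hx =>
      (hR1.dotProduct_mulVec_nonneg x).lt_of_ne fun h0 => hx ?_
    have hRx : R *ᵥ x = 0 := (hR1.dotProduct_mulVec_zero_iff x).mp h0.symm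
    have hR2x : (A * A + C) *ᵥ x = 0 := by
      rw [← hR2', ← Matrix.mulVec_mulVec, hRx, Matrix.mulVec_zero]
    have hsum0 : star x ⬝ᵥ (A * A) *ᵥ x + star x ⬝ᵥ C *ᵥ x = 0 := by
      rw [← dotProduct_add, ← Matrix.add_mulVec, hR2x, dotProduct_zero]
    have hq1 : star x ⬝ᵥ (A * A) *ᵥ x = 0 := by
      refine le_antisymm ?_ (hAA.dotProduct_mulVec_nonneg x)
      rw [eq_neg_of_add_eq_zero_left hsum0]
      exact neg_nonpos.mpr (hC.dotProduct_mulVec_nonneg x)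
    have hq2 : star x ⬝ᵥ C *ᵥ x = 0 := by
      rw [hq1, zero_add] at hsum0; exact hsum0
    have hAx : A *ᵥ x = 0 := by
      have e : star x ⬝ᵥ (A * A) *ᵥ x = star (A *ᵥ x) ⬝ᵥ (A *ᵥ x) := by
        rw [Matrix.star_mulVec, hA.isHermitian.eq, ← Matrix.mulVec_mulVec,
          Matrix.dotProduct_mulVec]
      rw [e] at hq1
      exact dotProduct_star_self_eq_zero.mp hq1
    have hCx : C *ᵥ x = 0 := (hC.dotProduct_mulVec_zero_iff x).mp hq2
    have eP2 : (1 + P) * (1 - P) = 1 - P * P := by noncomm_ring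
    have eQ2 : (1 + Q) * (1 - Q) = 1 - Q * Q := by noncomm_ring
    have hTD : T * D = C := by
      rw [hTdef, hDdef, hCdef, ← Matrix.mul_kronecker_mul, eP2, eQ2]
    have hTw : T *ᵥ (D *ᵥ x) = 0 := by rw [Matrix.mulVec_mulVec, hTD, hCx]
    have hM4 : ((P ⊗ₖ (1 : Matrix (Fin n) (Fin n) ℂ)) +
        ((1 : Matrix (Fin m) (Fin m) ℂ) ⊗ₖ Q) + A).PosSemidef :=
      ((aux_kron_psd hP Matrix.PosSemidef.one).add
        (aux_kron_psd Matrix.PosSemidef.one hQ)).add hA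
    have hTsplit : T = 1 + ((P ⊗ₖ (1 : Matrix (Fin n) (Fin n) ℂ)) +
        ((1 : Matrix (Fin m) (Fin m) ℂ) ⊗ₖ Q) + A) := by
      rw [hTdef, hAdef, Matrix.add_kronecker, Matrix.kronecker_add, Matrix.kronecker_add,
        Matrix.one_kronecker_one]
      abel
    have hw2 : star (D *ᵥ x) ⬝ᵥ (D *ᵥ x) = 0 := by
      have h0 : star (D *ᵥ x) ⬝ᵥ T *ᵥ (D *ᵥ x) = 0 := by rw [hTw, dotProduct_zero]
      rw [hTsplit, Matrix.add_mulVec, dotProduct_add, Matrix.one_mulVec] at h0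
      refine le_antisymm ?_ (dotProduct_star_self_nonneg _)
      rw [eq_neg_of_add_eq_zero_left h0]
      exact neg_nonpos.mpr (hM4.dotProduct_mulVec_nonneg _)
    have hDx : D *ᵥ x = 0 := dotProduct_star_self_eq_zero.mp hw2
    exact hker x hAx hDx
  have hAR : A * R = R * A := aux_commute_of_commute_sq hRpd hARR
  obtain ⟨W, hWpd, hAW, hWW⟩ :
      ∃ W : Matrix (Fin m × Fin n) (Fin m × Fin n) ℂ, W.PosDef ∧ A * W = W * A ∧ W * W = R :=
    ⟨hRpd.posSemidef.sqrt, aux_sqrt_posDef hRpd, aux_commute_sqrt hRpd hAR,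
      hRpd.posSemidef.sqrt_mul_self⟩
  have hWdet : IsUnit W.det := (Matrix.isUnit_iff_isUnit_det _).mp hWpd.isUnit
  have hWinvH : W⁻¹ᴴ = W⁻¹ := hWpd.inv.isHermitian.eq
  have hRinv : R⁻¹ = W⁻¹ * W⁻¹ := by rw [← hWW, Matrix.mul_inv_rev]
  have hAWinv : A * W⁻¹ = W⁻¹ * A := aux_commute_inv hWpd.isUnit hAW
  have hX : A * R⁻¹ = W⁻¹ * A * W⁻¹ᴴ := by
    rw [hWinvH, hRinv, ← mul_assoc, hAWinv]
  constructor
  · rw [hX]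
    exact hA.mul_mul_conjTranspose_same _
  · have hRApd : (R + A).PosDef := hRpd.add_posSemidef hA
    have hRAdet : IsUnit (R + A).det := (Matrix.isUnit_iff_isUnit_det _).mp hRApd.isUnit
    have hCval : C = R * R - A * A := by rw [hR2']; exact (add_sub_cancel_left _ _).symm
    have hAAR : A * A * R = R * (A * A) := by
      rw [mul_assoc, hAR, ← mul_assoc, hAR, mul_assoc]
    have hRC : R * C = C * R := by
      rw [hCval, mul_sub, sub_mul, ← hAAR, ← mul_assoc]
    have hRAC : (R + A) * C = C * (R + A) := by rw [add_mul, mul_add, hRC, hAC]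
    have hCRAinv : C * (R + A)⁻¹ = (R + A)⁻¹ * C := aux_commute_inv hRApd.isUnit hRAC.symm
    have hfac : (R + A) * (R - A) = C := by
      have e2 : (R + A) * (R - A) = R * R - A * A + (A * R - R * A) := by noncomm_ring
      rw [hAR, sub_self, add_zero] at e2
      rw [e2, hCval]
    have hRA_sub : R - A = (R + A)⁻¹ * C := by
      rw [← hfac, ← mul_assoc, Matrix.nonsing_inv_mul _ hRAdet, one_mul]
    have hRA_psd : (R - A).PosSemidef := by
      rw [hRA_sub]
      exact aux_posSemidef_mul_of_commute hRApd.inv hC hCRAinv.symm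
    have e1 : W⁻¹ * R * W⁻¹ = 1 := by
      rw [← hWW, ← mul_assoc, Matrix.nonsing_inv_mul _ hWdet, one_mul,
        Matrix.mul_nonsing_inv _ hWdet]
    have h1X : 1 - A * R⁻¹ = W⁻¹ * (R - A) * W⁻¹ᴴ := by
      rw [hWinvH, mul_sub, sub_mul, e1, hX, hWinvH]
    rw [h1X]
    exact hRA_psd.mul_mul_conjTranspose_same _
end

section
/- Writing P₀ := √(id − P²) for a positive contraction P, one has (P ⋆ Q)₀ = P₀ ⋆ Q₀, i.e., id − (P⋆Q)² = (P₀ ⋆ Q₀)². -/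
open Matrix Kronecker
open scoped ComplexOrder

private lemma commute_of_commute_sq {k : Type*} [Fintype k] [DecidableEq k]
    {A B : Matrix k k ℂ} (hA : A.PosSemidef) (h : B * (A * A) = (A * A) * B) :
    B * A = A * B := by
  have hH := hA.1
  set U : Matrix k k ℂ := (hH.eigenvectorUnitary : Matrix k k ℂ) with hUdef
  have hU1 : star U * U = 1 := Matrix.mem_unitaryGroup_iff'.mp hH.eigenvectorUnitary.2
  have hU2 : U * star U = 1 := Matrix.mem_unitaryGroup_iff.mp hH.eigenvectorUnitary.2
  set d : k → ℂ := RCLike.ofReal ∘ hH.eigenvalues with hd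
  have hspec : A = U * diagonal d * star U := hH.spectral_theorem
  have conj_mul : ∀ X Y : Matrix k k ℂ,
      (U * X * star U) * (U * Y * star U) = U * (X * Y) * star U := by
    intro X Y
    simp only [← Matrix.mul_assoc]
    rw [Matrix.mul_assoc (U * X) (star U) U, hU1, Matrix.mul_one, Matrix.mul_assoc U X Y]
  have cancel : ∀ X : Matrix k k ℂ, star U * (U * X * star U) * U = X := by
    intro X
    simp only [← Matrix.mul_assoc]
    rw [hU1, Matrix.one_mul, Matrix.mul_assoc X (star U) U, hU1, Matrix.mul_one]
  set C : Matrix k k ℂ := star U * B * U with hC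
  have hB : U * C * star U = B := by
    rw [hC]
    simp only [← Matrix.mul_assoc]
    rw [hU2, Matrix.one_mul, Matrix.mul_assoc B U (star U), hU2, Matrix.mul_one]
  have hAA : A * A = U * (diagonal d * diagonal d) * star U := by
    conv_lhs => rw [hspec]
    rw [conj_mul]
  have h2 : U * (C * (diagonal d * diagonal d)) * star U
      = U * ((diagonal d * diagonal d) * C) * star U := by
    calc U * (C * (diagonal d * diagonal d)) * star U
        = (U * C * star U) * (U * (diagonal d * diagonal d) * star U) := (conj_mul _ _).symm
      _ = B * (A * A) := by rw [hB, ← hAA]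
      _ = (A * A) * B := h
      _ = (U * (diagonal d * diagonal d) * star U) * (U * C * star U) := by rw [hB, ← hAA]
      _ = U * ((diagonal d * diagonal d) * C) * star U := conj_mul _ _
  have hC2 : C * (diagonal d * diagonal d) = (diagonal d * diagonal d) * C := by
    have := congrArg (fun X => star U * X * U) h2
    simpa only [cancel] using this
  rw [diagonal_mul_diagonal] at hC2
  have key : ∀ i j, C i j * d j = d i * C i j := by
    intro i j
    have h3 : C i j * (d j * d j) = (d i * d i) * C i j := by
      have := congrFun (congrFun hC2 i) j
      simpa [Matrix.mul_diagonal, Matrix.diagonal_mul] using this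
    rcases eq_or_ne (C i j) 0 with h0 | h0
    · simp [h0]
    · have h4 : d j * d j = d i * d i :=
        mul_left_cancel₀ h0 (h3.trans (mul_comm _ _))
      have h5 : hH.eigenvalues j = hH.eigenvalues i := by
        have h6 : hH.eigenvalues j * hH.eigenvalues j
            = hH.eigenvalues i * hH.eigenvalues i := by
          have h7 := h4
          simp only [hd, Function.comp_apply] at h7
          exact_mod_cast h7
        rcases mul_self_eq_mul_self_iff.mp h6 with h7 | h7
        · exact h7
        · have hnj := hA.eigenvalues_nonneg j
          have hni := hA.eigenvalues_nonneg i
          linarith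
      simp [hd, h5, mul_comm]
  have hCD : C * diagonal d = diagonal d * C := by
    ext i j
    simp [Matrix.mul_diagonal, Matrix.diagonal_mul, key i j]
  calc B * A = (U * C * star U) * (U * diagonal d * star U) := by rw [hB, ← hspec]
    _ = U * (C * diagonal d) * star U := conj_mul _ _
    _ = U * (diagonal d * C) * star U := by rw [hCD]
    _ = (U * diagonal d * star U) * (U * C * star U) := (conj_mul _ _).symm
    _ = A * B := by rw [hB, ← hspec]

private lemma sq_mulVec_zero {k : Type*} [Fintype k]
    {M : Matrix k k ℂ} (hM : M.IsHermitian) {v : k → ℂ}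
    (h : star v ⬝ᵥ ((M * M) *ᵥ v) = 0) : M *ᵥ v = 0 := by
  have h1 : star (M *ᵥ v) ⬝ᵥ (M *ᵥ v) = 0 := by
    rw [star_mulVec, hM.eq, ← Matrix.dotProduct_mulVec, Matrix.mulVec_mulVec]
    exact h
  exact (dotProduct_star_self_eq_zero).mp h1

private lemma kronecker_isHermitian {m n : Type*} [Fintype m] [Fintype n]
    {A : Matrix m m ℂ} {B : Matrix n n ℂ}
    (hA : A.IsHermitian) (hB : B.IsHermitian) : (A ⊗ₖ B).IsHermitian := by
  ext ⟨i, j⟩ ⟨a, b⟩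
  simp only [conjTranspose_apply, kroneckerMap_apply, star_mul']
  rw [← conjTranspose_apply, ← conjTranspose_apply, hA.eq, hB.eq, mul_comm]

/-- Writing `P₀ := √(id − P²)` for a positive contraction `P`, one has
`(P ⋆ Q)₀ = P₀ ⋆ Q₀`, i.e. `id − (P ⋆ Q)² = (P₀ ⋆ Q₀)²`, where
`P ⋆ Q = (P ⊗ Q)(P² ⊗ Q² + P₀² ⊗ Q₀²)^{-1/2}` (note the denominators of
`P ⋆ Q` and `P₀ ⋆ Q₀` agree). -/
theorem stmt_12 {m n : ℕ} (P : Matrix (Fin m) (Fin m) ℂ) (Q : Matrix (Fin n) (Fin n) ℂ)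
    (hP : P.PosSemidef) (hP1 : (1 - P).PosSemidef)
    (hQ : Q.PosSemidef) (hQ1 : (1 - Q).PosSemidef)
    (hker : ∀ v : Fin m × Fin n → ℂ,
      (P ⊗ₖ Q).mulVec v = 0 → ((1 - P) ⊗ₖ (1 - Q)).mulVec v = 0 → v = 0)
    (P0 : Matrix (Fin m) (Fin m) ℂ) (hP0 : P0.PosSemidef) (hP0sq : P0 * P0 = 1 - P * P)
    (Q0 : Matrix (Fin n) (Fin n) ℂ) (hQ0 : Q0.PosSemidef) (hQ0sq : Q0 * Q0 = 1 - Q * Q)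
    (R : Matrix (Fin m × Fin n) (Fin m × Fin n) ℂ)
    (hR1 : R.PosSemidef)
    (hR2 : R * R = (P * P) ⊗ₖ (Q * Q) + (P0 * P0) ⊗ₖ (Q0 * Q0)) :
    1 - ((P ⊗ₖ Q) * R⁻¹) * ((P ⊗ₖ Q) * R⁻¹)
      = ((P0 ⊗ₖ Q0) * R⁻¹) * ((P0 ⊗ₖ Q0) * R⁻¹) := by
  -- basic commutations
  have hPP0 : P * P0 = P0 * P := by
    have : P * (P0 * P0) = (P0 * P0) * P := by rw [hP0sq]; noncomm_ring
    exact commute_of_commute_sq hP0 this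
  have hQQ0 : Q * Q0 = Q0 * Q := by
    have : Q * (Q0 * Q0) = (Q0 * Q0) * Q := by rw [hQ0sq]; noncomm_ring
    exact commute_of_commute_sq hQ0 this
  set S : Matrix (Fin m × Fin n) (Fin m × Fin n) ℂ := P ⊗ₖ Q with hSdef
  set T : Matrix (Fin m × Fin n) (Fin m × Fin n) ℂ := P0 ⊗ₖ Q0 with hTdef
  have hSsq : S * S = (P * P) ⊗ₖ (Q * Q) := (mul_kronecker_mul P P Q Q).symm
  have hTsq : T * T = (P0 * P0) ⊗ₖ (Q0 * Q0) := (mul_kronecker_mul P0 P0 Q0 Q0).symm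
  have hR2' : R * R = S * S + T * T := by rw [hSsq, hTsq]; exact hR2
  have hST : S * T = T * S := by
    rw [hSdef, hTdef, ← mul_kronecker_mul, ← mul_kronecker_mul, hPP0, hQQ0]
  have hSherm : S.IsHermitian := kronecker_isHermitian hP.1 hQ.1
  have hTherm : T.IsHermitian := kronecker_isHermitian hP0.1 hQ0.1
  -- S, T commute with R
  have hSTT : S * (T * T) = (T * T) * S := by
    calc S * (T * T) = (S * T) * T := by rw [mul_assoc]
      _ = (T * S) * T := by rw [hST]
      _ = T * (S * T) := by rw [mul_assoc]
      _ = T * (T * S) := by rw [hST]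
      _ = (T * T) * S := by rw [mul_assoc]
  have hTSS : T * (S * S) = (S * S) * T := by
    calc T * (S * S) = (T * S) * S := by rw [mul_assoc]
      _ = (S * T) * S := by rw [hST]
      _ = S * (T * S) := by rw [mul_assoc]
      _ = S * (S * T) := by rw [hST]
      _ = (S * S) * T := by rw [mul_assoc]
  have hSR : S * R = R * S := by
    refine commute_of_commute_sq hR1 ?_
    rw [hR2', mul_add, add_mul, hSTT]
    noncomm_ring
  have hTR : T * R = R * T := by
    refine commute_of_commute_sq hR1 ?_
    rw [hR2', mul_add, add_mul, hTSS]
    noncomm_ring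
  -- R is invertible
  have hRker : ∀ v : Fin m × Fin n → ℂ, R *ᵥ v = 0 → v = 0 := by
    intro v hv
    have hv2 : (R * R) *ᵥ v = 0 := by
      rw [← Matrix.mulVec_mulVec, hv, Matrix.mulVec_zero]
    rw [hR2'] at hv2
    have hSS : (S * S).PosSemidef := by
      have := Matrix.posSemidef_conjTranspose_mul_self S
      rwa [hSherm.eq] at this
    have hTT : (T * T).PosSemidef := by
      have := Matrix.posSemidef_conjTranspose_mul_self T
      rwa [hTherm.eq] at this
    have hsum : star v ⬝ᵥ ((S * S) *ᵥ v) + star v ⬝ᵥ ((T * T) *ᵥ v) = 0 := by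
      rw [← dotProduct_add, ← Matrix.add_mulVec, hv2, dotProduct_zero]
    have ha := hSS.dotProduct_mulVec_nonneg v
    have hb := hTT.dotProduct_mulVec_nonneg v
    have hSz : star v ⬝ᵥ ((S * S) *ᵥ v) = 0 := by
      refine le_antisymm ?_ ha
      have : star v ⬝ᵥ ((S * S) *ᵥ v) = -(star v ⬝ᵥ ((T * T) *ᵥ v)) := by linear_combination hsum
      rw [this]
      simpa using hb
    have hTz : star v ⬝ᵥ ((T * T) *ᵥ v) = 0 := by linear_combination hsum - hSz
    have hSv : S *ᵥ v = 0 := sq_mulVec_zero hSherm hSz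
    have hTv : T *ᵥ v = 0 := sq_mulVec_zero hTherm hTz
    -- transfer to the kernel hypothesis
    set K : Matrix (Fin m × Fin n) (Fin m × Fin n) ℂ := (1 + P) ⊗ₖ (1 + Q) with hK
    set w : Fin m × Fin n → ℂ := K *ᵥ v with hw
    have hSw : S *ᵥ w = 0 := by
      have hcomm : S * K = K * S := by
        have e : P * (1 + P) = (1 + P) * P := by noncomm_ring
        have e' : Q * (1 + Q) = (1 + Q) * Q := by noncomm_ring
        rw [hSdef, hK, ← mul_kronecker_mul, ← mul_kronecker_mul, e, e']
      rw [hw, Matrix.mulVec_mulVec, hcomm, ← Matrix.mulVec_mulVec, hSv, Matrix.mulVec_zero]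
    have hTw : ((1 - P) ⊗ₖ (1 - Q)) *ᵥ w = 0 := by
      have : ((1 - P) ⊗ₖ (1 - Q)) * K = T * T := by
        have e : (1 - P) * (1 + P) = 1 - P * P := by noncomm_ring
        have e' : (1 - Q) * (1 + Q) = 1 - Q * Q := by noncomm_ring
        rw [hK, hTsq, ← mul_kronecker_mul, hP0sq, hQ0sq, e, e']
      rw [hw, Matrix.mulVec_mulVec, this, ← Matrix.mulVec_mulVec, hTv, Matrix.mulVec_zero]
    have hw0 : w = 0 := hker w hSw hTw
    -- K is invertible, hence v = 0
    have hPd : (1 + P).PosDef := Matrix.PosDef.one.add_posSemidef hP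
    have hQd : (1 + Q).PosDef := Matrix.PosDef.one.add_posSemidef hQ
    have hKdet : IsUnit K.det := by
      rw [hK, det_kronecker]
      exact ((hPd.det_pos.ne'.isUnit.pow _).mul (hQd.det_pos.ne'.isUnit.pow _))
    have hKinj : Function.Injective K.mulVec :=
      Matrix.mulVec_injective_iff_isUnit.mpr (Matrix.isUnit_iff_isUnit_det K |>.mpr hKdet)
    have : K *ᵥ v = K *ᵥ 0 := by rw [Matrix.mulVec_zero, ← hw, hw0]
    exact hKinj this
  have hRdet : IsUnit R.det := by
    rw [← Matrix.isUnit_iff_isUnit_det, ← Matrix.mulVec_injective_iff_isUnit]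
    intro x y hxy
    have : R *ᵥ (x - y) = 0 := by
      rw [Matrix.mulVec_sub, hxy, sub_self]
    have := hRker _ this
    exact sub_eq_zero.mp this
  have hRi1 : R * R⁻¹ = 1 := Matrix.mul_nonsing_inv R hRdet
  have hRi2 : R⁻¹ * R = 1 := Matrix.nonsing_inv_mul R hRdet
  -- S, T commute with R⁻¹
  have hSRi : S * R⁻¹ = R⁻¹ * S := by
    calc S * R⁻¹ = R⁻¹ * R * S * R⁻¹ := by rw [hRi2, Matrix.one_mul]
      _ = R⁻¹ * (R * S) * R⁻¹ := by rw [Matrix.mul_assoc R⁻¹ R S]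
      _ = R⁻¹ * (S * R) * R⁻¹ := by rw [hSR]
      _ = R⁻¹ * S * (R * R⁻¹) := by simp only [Matrix.mul_assoc]
      _ = R⁻¹ * S := by rw [hRi1, Matrix.mul_one]
  have hTRi : T * R⁻¹ = R⁻¹ * T := by
    calc T * R⁻¹ = R⁻¹ * R * T * R⁻¹ := by rw [hRi2, Matrix.one_mul]
      _ = R⁻¹ * (R * T) * R⁻¹ := by rw [Matrix.mul_assoc R⁻¹ R T]
      _ = R⁻¹ * (T * R) * R⁻¹ := by rw [hTR]
      _ = R⁻¹ * T * (R * R⁻¹) := by simp only [Matrix.mul_assoc]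
      _ = R⁻¹ * T := by rw [hRi1, Matrix.mul_one]
  -- final computation
  show 1 - (S * R⁻¹) * (S * R⁻¹) = (T * R⁻¹) * (T * R⁻¹)
  have e1 : (S * R⁻¹) * (S * R⁻¹) = S * S * (R⁻¹ * R⁻¹) := by
    calc (S * R⁻¹) * (S * R⁻¹) = S * (R⁻¹ * S) * R⁻¹ := by noncomm_ring
      _ = S * (S * R⁻¹) * R⁻¹ := by rw [hSRi]
      _ = S * S * (R⁻¹ * R⁻¹) := by noncomm_ring
  have e2 : (T * R⁻¹) * (T * R⁻¹) = T * T * (R⁻¹ * R⁻¹) := by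
    calc (T * R⁻¹) * (T * R⁻¹) = T * (R⁻¹ * T) * R⁻¹ := by noncomm_ring
      _ = T * (T * R⁻¹) * R⁻¹ := by rw [hTRi]
      _ = T * T * (R⁻¹ * R⁻¹) := by noncomm_ring
  have e3 : (R * R) * (R⁻¹ * R⁻¹) = 1 := by
    calc (R * R) * (R⁻¹ * R⁻¹) = R * (R * R⁻¹) * R⁻¹ := by noncomm_ring
      _ = 1 := by rw [hRi1, Matrix.mul_one, hRi1]
  rw [e1, e2, ← e3, hR2']
  noncomm_ring
end

section
/- Let m = (A,B,H) be a finite-dimensional P-module with A normal and B invertible. If p is an orthogonal projection on H with Ap = pAp and Bp = pBp, then pA = Ap and pB = Bp. Consequently the orthogonal complement of any A,B-invariant subspace is again A,B-invariant. -/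
open ContinuousLinearMap

section Aux
variable {H : Type*} [NormedAddCommGroup H] [InnerProductSpace ℂ H] [FiniteDimensional ℂ H]

private lemma tr_star_mul_aux (T : H →L[ℂ] H) :
    LinearMap.trace ℂ H ((star T * T : H →L[ℂ] H) : H →ₗ[ℂ] H)
      = ∑ i, ((‖T (stdOrthonormalBasis ℂ H i)‖ : ℂ))^2 := by
  set b := stdOrthonormalBasis ℂ H
  rw [LinearMap.trace_eq_matrix_trace ℂ b.toBasis, Matrix.trace]
  congr 1
  ext i
  rw [Matrix.diag_apply, LinearMap.toMatrix_apply, OrthonormalBasis.coe_toBasis,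
    OrthonormalBasis.coe_toBasis_repr_apply, OrthonormalBasis.repr_apply_apply]
  show @inner ℂ _ _ (b i) ((star T * T) (b i)) = _
  rw [ContinuousLinearMap.mul_apply, ContinuousLinearMap.star_eq_adjoint, adjoint_inner_right,
    inner_self_eq_norm_sq_to_K]
  norm_cast

private lemma star_mul_eq_zero_of_trace (T : H →L[ℂ] H)
    (h : LinearMap.trace ℂ H ((star T * T : H →L[ℂ] H) : H →ₗ[ℂ] H) = 0) : T = 0 := by
  set b := stdOrthonormalBasis ℂ H
  rw [tr_star_mul_aux] at h
  have h' : ∑ i, (‖T (b i)‖ : ℝ)^2 = 0 := by exact_mod_cast h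
  have hz : ∀ i, T (b i) = 0 := by
    intro i
    have := (Finset.sum_eq_zero_iff_of_nonneg (fun i _ => sq_nonneg (‖T (b i)‖ : ℝ))).mp h'
      i (Finset.mem_univ i)
    have := pow_eq_zero_iff (n := 2) (by norm_num) |>.mp this
    simpa using this
  have : (T : H →ₗ[ℂ] H) = (0 : H →L[ℂ] H) := b.toBasis.ext fun i => by
    simp [hz i]
  exact ContinuousLinearMap.coe_injective this

/-- Invariance of a subprojection under a normal operator passes to the adjoint. -/
private lemma coreA (A p : H →L[ℂ] H)
    (hA : star A * A = A * star A)
    (hp1 : star p = p) (hp2 : p * p = p)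
    (hAp : A * p = p * (A * p)) :
    star A * p = p * (star A * p) := by
  set Y : H →L[ℂ] H := star A * p - p * (star A * p) with hYdef
  have key : star Y * Y = star (A * p) * (A * p) - (A * p) * star (A * p) := by
    have h1 : ∀ x : H →L[ℂ] H, p * (p * x) = p * x := fun x => by rw [← mul_assoc, hp2]
    have h2 : ∀ x : H →L[ℂ] H, p * (A * (p * x)) = A * (p * x) := fun x => by
      rw [← mul_assoc, ← mul_assoc, mul_assoc p A p, ← hAp, mul_assoc]
    have hXstar : star (A * p) = p * (star A * p) := by
      conv_lhs => rw [hAp]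
      simp [star_mul, hp1, mul_assoc]
    have hN : ∀ x : H →L[ℂ] H, star A * (A * x) = A * (star A * x) := fun x => by
      rw [← mul_assoc, hA, mul_assoc]
    rw [hYdef, hXstar]
    simp only [star_sub, star_mul, hp1, star_star, sub_mul, mul_sub, mul_assoc, h1, h2, hN, ← hAp]
    abel
  have htr : LinearMap.trace ℂ H ((star Y * Y : H →L[ℂ] H) : H →ₗ[ℂ] H) = 0 := by
    rw [key]
    have : ((star (A * p) * (A * p) - (A * p) * star (A * p) : H →L[ℂ] H) : H →ₗ[ℂ] H)
        = (star (A * p) : H →L[ℂ] H).toLinearMap * (A * p : H →L[ℂ] H).toLinearMap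
          - (A * p : H →L[ℂ] H).toLinearMap * (star (A * p) : H →L[ℂ] H).toLinearMap := rfl
    rw [this, map_sub, LinearMap.trace_mul_comm, sub_self]
  have hY0 : Y = 0 := star_mul_eq_zero_of_trace Y htr
  have := sub_eq_zero.mp hY0
  exact this

end Aux

/-- Let `(A,B,H)` be a finite-dimensional P-module with `A` normal and `B`
invertible. If `p` is an orthogonal projection with `Ap = pAp` and `Bp = pBp`,
then `pA = Ap` and `pB = Bp`. Consequently the orthogonal complement of any
`A,B`-invariant subspace is again `A,B`-invariant. -/
theorem stmt_13 {H : Type*} [NormedAddCommGroup H] [InnerProductSpace ℂ H]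
    [FiniteDimensional ℂ H] (A B : H →L[ℂ] H)
    (hpyth : (adjoint A) ∘L A + (adjoint B) ∘L B = ContinuousLinearMap.id ℂ H)
    (hA : (adjoint A) ∘L A = A ∘L (adjoint A))
    (hB : IsUnit B) :
    (∀ p : H →L[ℂ] H, adjoint p = p → p ∘L p = p →
      A ∘L p = p ∘L (A ∘L p) → B ∘L p = p ∘L (B ∘L p) →
      p ∘L A = A ∘L p ∧ p ∘L B = B ∘L p) ∧
    (∀ K : Submodule ℂ H, (∀ x ∈ K, A x ∈ K) → (∀ x ∈ K, B x ∈ K) →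
      ∀ x ∈ Kᗮ, A x ∈ Kᗮ ∧ B x ∈ Kᗮ) := by
  have hBinj : Function.Injective B := by
    obtain ⟨u, rfl⟩ := hB
    intro x y hxy
    have : (↑u⁻¹ * ↑u : H →L[ℂ] H) x = (↑u⁻¹ * ↑u : H →L[ℂ] H) y := by
      simp only [ContinuousLinearMap.mul_apply]; rw [hxy]
    simpa [u.inv_mul] using this
  -- main part 1
  have part1 : ∀ p : H →L[ℂ] H, adjoint p = p → p ∘L p = p →
      A ∘L p = p ∘L (A ∘L p) → B ∘L p = p ∘L (B ∘L p) →
      p ∘L A = A ∘L p ∧ p ∘L B = B ∘L p := by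
    intro p hp1 hp2 hAp hBp
    have hp1' : star p = p := hp1
    have hp2' : p * p = p := hp2
    have hAp' : A * p = p * (A * p) := hAp
    have hBp' : B * p = p * (B * p) := hBp
    have hA' : star A * A = A * star A := hA
    -- adjoint of A is compatible
    have hsA : star A * p = p * (star A * p) := coreA A p hA' hp1' hp2' hAp'
    -- the range of p
    set K : Submodule ℂ H := LinearMap.range (p : H →ₗ[ℂ] H) with hK
    have memK : ∀ x : H, x ∈ K ↔ p x = x := by
      intro x
      constructor
      · rintro ⟨y, rfl⟩
        have := congrArg (fun f : H →L[ℂ] H => f y) hp2'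
        simpa using this
      · intro h; exact ⟨x, h⟩
    have hpK : ∀ x : H, p x ∈ K := fun x => ⟨x, rfl⟩
    have hAK : ∀ x ∈ K, A x ∈ K := by
      intro x hx
      rw [← (memK x).mp hx]
      have := congrArg (fun f : H →L[ℂ] H => f x) hAp'
      simp only [ContinuousLinearMap.mul_apply] at this
      rw [show A (p x) = p (A (p x)) from this]
      exact hpK _
    have hsAK : ∀ x ∈ K, star A x ∈ K := by
      intro x hx
      rw [← (memK x).mp hx]
      have := congrArg (fun f : H →L[ℂ] H => f x) hsA
      simp only [ContinuousLinearMap.mul_apply] at this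
      rw [show star A (p x) = p (star A (p x)) from this]
      exact hpK _
    have hBK : ∀ x ∈ K, B x ∈ K := by
      intro x hx
      rw [← (memK x).mp hx]
      have := congrArg (fun f : H →L[ℂ] H => f x) hBp'
      simp only [ContinuousLinearMap.mul_apply] at this
      rw [show B (p x) = p (B (p x)) from this]
      exact hpK _
    -- B maps K onto K
    have hmaple : K.map (B : H →ₗ[ℂ] H) ≤ K := by
      rintro _ ⟨y, hy, rfl⟩
      exact hBK y hy
    have hmapeq : K.map (B : H →ₗ[ℂ] H) = K := by
      apply Submodule.eq_of_le_of_finrank_le hmaple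
      exact le_of_eq (Submodule.equivMapOfInjective (B : H →ₗ[ℂ] H) hBinj K).finrank_eq
    -- star B preserves K
    have hsBK : ∀ x ∈ K, star B x ∈ K := by
      intro x hx
      rw [← hmapeq] at hx
      obtain ⟨k, hk, rfl⟩ := hx
      show star B (B k) ∈ K
      have hpyth' : star A * A + star B * B = 1 := hpyth
      have : star B (B k) = k - star A (A k) := by
        have := congrArg (fun f : H →L[ℂ] H => f k) hpyth'
        simp only [ContinuousLinearMap.add_apply, ContinuousLinearMap.mul_apply,
          ContinuousLinearMap.one_apply] at this
        linear_combination (norm := module) this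
      rw [this]
      exact K.sub_mem hk (hsAK _ (hAK _ hk))
    have hsB : star B * p = p * (star B * p) := by
      ext x
      simp only [ContinuousLinearMap.mul_apply]
      exact ((memK _).mp (hsBK _ (hpK x))).symm
    constructor
    · -- p A = A p
      have := congrArg star hsA
      simp only [star_mul, hp1', star_star] at this
      -- this : p * A = (p * (star (star A))) ... compute
      calc (p ∘L A : H →L[ℂ] H) = p * A := rfl
        _ = p * A * p := this
        _ = p * (A * p) := by rw [mul_assoc]
        _ = A * p := (hAp').symm
    · have := congrArg star hsB
      simp only [star_mul, hp1', star_star] at this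
      calc (p ∘L B : H →L[ℂ] H) = p * B := rfl
        _ = p * B * p := this
        _ = p * (B * p) := by rw [mul_assoc]
        _ = B * p := (hBp').symm
  refine ⟨part1, ?_⟩
  intro K hAK hBK x hx
  set P : H →L[ℂ] H := K.subtypeL ∘L K.orthogonalProjectionOnto with hP
  have hPmem : ∀ v : H, P v ∈ K := fun v => (K.orthogonalProjectionOnto v).2
  have hPfix : ∀ v ∈ K, P v = v := fun v hv => Submodule.starProjection_eq_self_iff.mpr hv
  have hP1 : adjoint P = P := (isSelfAdjoint_starProjection K).adjoint_eq
  have hP2 : P ∘L P = P := by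
    ext v
    exact hPfix _ (hPmem v)
  have hPA : A ∘L P = P ∘L (A ∘L P) := by
    ext v
    exact (hPfix _ (hAK _ (hPmem v))).symm
  have hPB : B ∘L P = P ∘L (B ∘L P) := by
    ext v
    exact (hPfix _ (hBK _ (hPmem v))).symm
  obtain ⟨hcA, hcB⟩ := part1 P hP1 hP2 hPA hPB
  have hPx : P x = 0 := by
    simp only [hP, ContinuousLinearMap.comp_apply]
    rw [Submodule.orthogonalProjectionOnto_eq_zero_iff.mpr hx]
    rfl
  have hmemiff : ∀ v : H, P v = 0 → v ∈ Kᗮ := by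
    intro v hv
    rw [← Submodule.orthogonalProjectionOnto_eq_zero_iff (K := K)]
    ext
    exact hv
  constructor
  · apply hmemiff
    have := congrArg (fun f : H →L[ℂ] H => f x) hcA
    simp only [ContinuousLinearMap.comp_apply] at this
    rw [this, hPx, map_zero]
  · apply hmemiff
    have := congrArg (fun f : H →L[ℂ] H => f x) hcB
    simp only [ContinuousLinearMap.comp_apply] at this
    rw [this, hPx, map_zero]
end

section
/- Let (A,B,H) be a finite-dimensional P-module with A and B both invertible. Then the operator norms satisfy ‖A‖ < 1 and ‖B‖ < 1, and consequently for every infinite sequence (Cₙ) with each Cₙ ∈ {A,B}, the products Cₙ⋯C₁ converge to 0 in norm. -/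
open ContinuousLinearMap

/-- The word `Cₙ ⋯ C₁` of length `n` in the letters `C`. -/
def wordProd {M : Type*} [Monoid M] (C : ℕ → M) : ℕ → M
  | 0 => 1
  | n + 1 => C n * wordProd C n

section aux

variable {H : Type*} [NormedAddCommGroup H] [InnerProductSpace ℂ H]
    [FiniteDimensional ℂ H]

lemma pyth_norms (A B : H →L[ℂ] H)
    (hpyth : (adjoint A) ∘L A + (adjoint B) ∘L B = ContinuousLinearMap.id ℂ H)
    (x : H) : ‖A x‖ ^ 2 + ‖B x‖ ^ 2 = ‖x‖ ^ 2 := by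
  have h := congrArg (fun T : H →L[ℂ] H => (inner ℂ (T x) x : ℂ)) hpyth
  simp only [ContinuousLinearMap.add_apply, ContinuousLinearMap.comp_apply,
    ContinuousLinearMap.id_apply, inner_add_left, adjoint_inner_left] at h
  rw [inner_self_eq_norm_sq_to_K, inner_self_eq_norm_sq_to_K,
    inner_self_eq_norm_sq_to_K] at h
  exact_mod_cast h

lemma norm_lt_one_of_pyth (A B : H →L[ℂ] H)
    (hpyth : (adjoint A) ∘L A + (adjoint B) ∘L B = ContinuousLinearMap.id ℂ H)
    (hB : IsUnit B) : ‖A‖ < 1 := by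
  rcases subsingleton_or_nontrivial H with hsub | hnt
  · have : A = 0 := Subsingleton.elim _ _
    rw [this, norm_zero]; exact one_pos
  -- B invertible: lower bound ‖x‖ ≤ ‖B⁻¹‖ * ‖B x‖
  obtain ⟨u, hu⟩ := hB
  set c : ℝ := ‖(↑u⁻¹ : H →L[ℂ] H)‖ with hc
  have hlow : ∀ x : H, ‖x‖ ≤ c * ‖B x‖ := by
    intro x
    have : (↑u⁻¹ : H →L[ℂ] H) (B x) = x := by
      rw [← hu, ← ContinuousLinearMap.comp_apply, ← ContinuousLinearMap.mul_def,
        ← Units.val_mul, inv_mul_cancel, Units.val_one, ContinuousLinearMap.one_apply]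
    calc ‖x‖ = ‖(↑u⁻¹ : H →L[ℂ] H) (B x)‖ := by rw [this]
      _ ≤ c * ‖B x‖ := le_opNorm _ _
  have hc1 : 1 ≤ c := by
    obtain ⟨x, hx⟩ := exists_ne (0 : H)
    have hxpos : 0 < ‖x‖ := norm_pos_iff.mpr hx
    have h1 := hlow x
    have hBx : ‖B x‖ ≤ ‖B‖ * ‖x‖ := le_opNorm _ _
    have hB1 : ‖B‖ ≤ 1 := by
      refine opNorm_le_bound _ zero_le_one fun y => ?_
      have := pyth_norms A B hpyth y
      nlinarith [sq_nonneg (‖A y‖), norm_nonneg (B y), norm_nonneg y]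
    have hcnn : (0:ℝ) ≤ c := norm_nonneg _
    by_contra hlt
    push_neg at hlt
    have h2 : c * ‖B x‖ ≤ c * (‖B‖ * ‖x‖) := mul_le_mul_of_nonneg_left hBx hcnn
    have h4 : c * ‖B‖ < 1 := lt_of_le_of_lt (mul_le_of_le_one_right hcnn hB1) hlt
    have h3 : c * ‖B‖ * ‖x‖ < 1 * ‖x‖ := mul_lt_mul_of_pos_right h4 hxpos
    rw [mul_assoc] at h3
    rw [one_mul] at h3
    linarith
  have hcpos : 0 < c := lt_of_lt_of_le one_pos hc1
  set r : ℝ := Real.sqrt (1 - 1 / c ^ 2) with hr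
  have hr0 : 0 ≤ 1 - 1 / c ^ 2 := by
    have : 1 / c ^ 2 ≤ 1 := by
      rw [div_le_one (by positivity)]
      nlinarith
    linarith
  have hbound : ∀ x : H, ‖A x‖ ≤ r * ‖x‖ := by
    intro x
    have hp := pyth_norms A B hpyth x
    have hl := hlow x
    have h2 : ‖A x‖ ^ 2 ≤ (1 - 1 / c ^ 2) * ‖x‖ ^ 2 := by
      have hBx2 : ‖x‖ ^ 2 / c ^ 2 ≤ ‖B x‖ ^ 2 := by
        rw [div_le_iff₀ (by positivity)]
        nlinarith [norm_nonneg x, norm_nonneg (B x)]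
      have : ‖A x‖ ^ 2 = ‖x‖ ^ 2 - ‖B x‖ ^ 2 := by linarith
      rw [this]
      have : (1 - 1 / c ^ 2) * ‖x‖ ^ 2 = ‖x‖ ^ 2 - ‖x‖ ^ 2 / c ^ 2 := by ring
      linarith
    calc ‖A x‖ = Real.sqrt (‖A x‖ ^ 2) := (Real.sqrt_sq (norm_nonneg _)).symm
      _ ≤ Real.sqrt ((1 - 1 / c ^ 2) * ‖x‖ ^ 2) := Real.sqrt_le_sqrt h2
      _ = r * ‖x‖ := by
          rw [Real.sqrt_mul hr0, Real.sqrt_sq (norm_nonneg _)]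
  have hAle : ‖A‖ ≤ r := opNorm_le_bound _ (Real.sqrt_nonneg _) hbound
  have hrlt : r < 1 := by
    have h1 : r < Real.sqrt 1 := by
      apply Real.sqrt_lt_sqrt hr0
      have : 0 < 1 / c ^ 2 := by positivity
      linarith
    simpa using h1
  exact lt_of_le_of_lt hAle hrlt

end aux

/-- Let `(A,B,H)` be a finite-dimensional P-module with `A, B` invertible. Then
`‖A‖ < 1` and `‖B‖ < 1`, and every infinite product of `A`'s and `B`'s converges
to `0` in norm. -/
theorem stmt_14 {H : Type*} [NormedAddCommGroup H] [InnerProductSpace ℂ H]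
    [FiniteDimensional ℂ H] (A B : H →L[ℂ] H)
    (hpyth : (adjoint A) ∘L A + (adjoint B) ∘L B = ContinuousLinearMap.id ℂ H)
    (hA : IsUnit A) (hB : IsUnit B) :
    ‖A‖ < 1 ∧ ‖B‖ < 1 ∧
    ∀ C : ℕ → (H →L[ℂ] H), (∀ n, C n = A ∨ C n = B) →
      Filter.Tendsto (fun n => ‖wordProd C n‖) Filter.atTop (nhds 0) := by
  have hA1 : ‖A‖ < 1 := norm_lt_one_of_pyth A B hpyth hB
  have hB1 : ‖B‖ < 1 := by
    apply norm_lt_one_of_pyth B A _ hA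
    rw [← hpyth]; abel
  refine ⟨hA1, hB1, fun C hC => ?_⟩
  set r : ℝ := max ‖A‖ ‖B‖ with hrdef
  have hr0 : 0 ≤ r := le_trans (norm_nonneg A) (le_max_left _ _)
  have hr1 : r < 1 := max_lt hA1 hB1
  have hbound : ∀ n, ‖wordProd C n‖ ≤ r ^ n := by
    intro n
    induction n with
    | zero =>
        show ‖(1 : H →L[ℂ] H)‖ ≤ r ^ 0
        rw [pow_zero, ContinuousLinearMap.one_def]
        exact norm_id_le
    | succ n ih =>
        have hCn : ‖C n‖ ≤ r := by
          rcases hC n with h | h <;> rw [h]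
          · exact le_max_left _ _
          · exact le_max_right _ _
        calc ‖wordProd C (n + 1)‖ = ‖C n * wordProd C n‖ := rfl
          _ ≤ ‖C n‖ * ‖wordProd C n‖ := norm_mul_le _ _
          _ ≤ r * r ^ n := by
              apply mul_le_mul hCn ih (norm_nonneg _) hr0
          _ = r ^ (n + 1) := (pow_succ' r n).symm
  exact squeeze_zero (fun n => norm_nonneg _) hbound
    (tendsto_pow_atTop_nhds_zero_of_lt_one hr0 hr1)
end

section
/- If (A,B,H) and (Ã,B̃,H̃) are finite-dimensional P-modules with A, Ã normal and B, B̃ invertible, then in the tensor product P-module ((A⊗Ã)K⁻¹, (B⊗B̃)K⁻¹, H⊗H̃) with K = √(|A|²⊗|Ã|² + |B|²⊗|B̃|²), the first operator (A⊗Ã)K⁻¹ is normal and the second operator (B⊗B̃)K⁻¹ is invertible. -/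
open Matrix Kronecker
open scoped ComplexOrder

/-- Conjugate transpose distributes over Kronecker products. -/
lemma kron_conjTranspose {m n : ℕ} (X : Matrix (Fin m) (Fin m) ℂ)
    (Y : Matrix (Fin n) (Fin n) ℂ) : (X ⊗ₖ Y)ᴴ = Xᴴ ⊗ₖ Yᴴ := by
  ext ⟨i, j⟩ ⟨k, l⟩
  simp [Matrix.conjTranspose_apply, Matrix.kroneckerMap_apply, mul_comm]

/-- `MᴴM` is positive definite when `M` is invertible. -/
lemma posDef_conjTranspose_mul_self_of_isUnit {N : Type*} [Fintype N] [DecidableEq N]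
    {M : Matrix N N ℂ} (h : IsUnit M) : (Mᴴ * M).PosDef := by
  refine Matrix.PosDef.of_dotProduct_mulVec_pos (Matrix.isHermitian_conjTranspose_mul_self M) fun x hx => ?_
  have hinj := Matrix.mulVec_injective_iff_isUnit.mpr h
  have hMx : M *ᵥ x ≠ 0 := fun hc => hx (hinj (by simpa using hc))
  have hdp : star x ⬝ᵥ (Mᴴ * M) *ᵥ x = star (M *ᵥ x) ⬝ᵥ (M *ᵥ x) := by
    rw [← Matrix.mulVec_mulVec, Matrix.dotProduct_mulVec, Matrix.vecMul_conjTranspose,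
      star_star]
  rw [hdp]
  exact Matrix.dotProduct_star_self_pos_iff.mpr hMx

/-- Anything commuting with the square of a PSD matrix commutes with the matrix. -/
lemma commute_of_commute_sq_s15 {N : Type*} [Fintype N] [DecidableEq N]
    {K X : Matrix N N ℂ} (hK : K.PosSemidef) (h : X * (K * K) = (K * K) * X) :
    X * K = K * X := by
  have hH := hK.1
  set U : Matrix N N ℂ := (hH.eigenvectorUnitary : Matrix N N ℂ) with hUdef
  set d := hH.eigenvalues with hddef
  set D : Matrix N N ℂ := Matrix.diagonal (RCLike.ofReal ∘ d) with hDdef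
  have hUU : star U * U = 1 := Matrix.mem_unitaryGroup_iff'.mp hH.eigenvectorUnitary.2
  have hUU' : U * star U = 1 := Matrix.mem_unitaryGroup_iff.mp hH.eigenvectorUnitary.2
  have hspec : K = U * D * star U := hH.spectral_theorem
  set Y := star U * X * U with hY
  have hX : X = U * Y * star U := by
    rw [hY]
    calc X = (U * star U) * X * (U * star U) := by rw [hUU']; simp
    _ = U * (star U * X * U) * star U := by noncomm_ring
  have h2 : K * K = U * (D * D) * star U := by
    rw [hspec]
    calc U * D * star U * (U * D * star U)
        = U * (D * ((star U * U) * D)) * star U := by noncomm_ring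
      _ = U * (D * D) * star U := by rw [hUU]; noncomm_ring
  have hcomm : X * (U * (D * D) * star U) = (U * (D * D) * star U) * X := by
    rw [← h2]; exact h
  have hYD2 : Y * (D * D) = (D * D) * Y := by
    have e1 : Y * (D * D) = star U * (X * (U * (D * D) * star U)) * U := by
      rw [hY]
      have e : star U * (X * (U * (D * D) * star U)) * U
          = star U * X * U * (D * D) * (star U * U) := by noncomm_ring
      rw [e, hUU, mul_one]
    have e2 : star U * ((U * (D * D) * star U) * X) * U = (D * D) * Y := by
      rw [hY]
      have e : star U * ((U * (D * D) * star U) * X) * U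
          = (star U * U) * ((D * D) * (star U * X * U)) := by noncomm_ring
      rw [e, hUU, one_mul]
    rw [e1, hcomm, e2]
  have hdd : D * D = Matrix.diagonal (fun k => (d k : ℂ) * (d k : ℂ)) := by
    rw [hDdef, Matrix.diagonal_mul_diagonal]
    rfl
  rw [hdd] at hYD2
  have key : Y * D = D * Y := by
    ext i j
    have hij := Matrix.ext_iff.mpr hYD2 i j
    simp only [Matrix.mul_diagonal, Matrix.diagonal_mul] at hij
    simp only [hDdef, Matrix.mul_diagonal, Matrix.diagonal_mul, Function.comp_apply]
    by_cases hzero : Y i j = 0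
    · simp [hzero]
    · have hc : (d j : ℂ) * (d j : ℂ) = (d i : ℂ) * (d i : ℂ) := by
        refine mul_left_cancel₀ hzero ?_
        rw [hij]; ring
      have h' : d j * d j = d i * d i := by exact_mod_cast hc
      have hr : d j = d i :=
        (mul_self_inj (hK.eigenvalues_nonneg j) (hK.eigenvalues_nonneg i)).mp h'
      rw [hr, mul_comm]
  have e3 : X * K = U * (Y * D) * star U := by
    rw [hX, hspec]
    have e : U * Y * star U * (U * D * star U)
        = U * (Y * ((star U * U) * D)) * star U := by noncomm_ring
    rw [e, hUU, one_mul]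
  have e4 : U * (D * Y) * star U = K * X := by
    rw [hX, hspec]
    have e : U * D * star U * (U * Y * star U)
        = U * (D * ((star U * U) * Y)) * star U := by noncomm_ring
    rw [e, hUU, one_mul]
  rw [e3, key]
  exact e4

/-- If `(A,B)` and `(Ã,B̃)` are finite-dimensional P-modules with `A, Ã` normal
and `B, B̃` invertible, then in the tensor product P-module
`((A ⊗ Ã)K⁻¹, (B ⊗ B̃)K⁻¹)` with `K = √(|A|² ⊗ |Ã|² + |B|² ⊗ |B̃|²)`,
the operator `(A ⊗ Ã)K⁻¹` is normal and `(B ⊗ B̃)K⁻¹` is invertible. -/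
theorem stmt_15 {m n : ℕ} (A B : Matrix (Fin m) (Fin m) ℂ)
    (At Bt : Matrix (Fin n) (Fin n) ℂ)
    (hm : Aᴴ * A + Bᴴ * B = 1) (hmt : Atᴴ * At + Btᴴ * Bt = 1)
    (hA : Aᴴ * A = A * Aᴴ) (hAt : Atᴴ * At = At * Atᴴ)
    (hB : IsUnit B) (hBt : IsUnit Bt)
    (K : Matrix (Fin m × Fin n) (Fin m × Fin n) ℂ)
    (hK1 : K.PosSemidef)
    (hK2 : K * K = (Aᴴ * A) ⊗ₖ (Atᴴ * At) + (Bᴴ * B) ⊗ₖ (Btᴴ * Bt)) :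
    (((A ⊗ₖ At) * K⁻¹)ᴴ * ((A ⊗ₖ At) * K⁻¹)
        = ((A ⊗ₖ At) * K⁻¹) * ((A ⊗ₖ At) * K⁻¹)ᴴ) ∧
    IsUnit ((B ⊗ₖ Bt) * K⁻¹) := by
  -- commutation of `A` with `AᴴA` and `BᴴB`
  have h1 : (Aᴴ * A) * A = A * (Aᴴ * A) := by rw [hA, mul_assoc, ← hA]
  have h1t : (Atᴴ * At) * At = At * (Atᴴ * At) := by rw [hAt, mul_assoc, ← hAt]
  have hb : Bᴴ * B = 1 - Aᴴ * A := eq_sub_of_add_eq' hm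
  have hbt : Btᴴ * Bt = 1 - Atᴴ * At := eq_sub_of_add_eq' hmt
  have h2 : (Bᴴ * B) * A = A * (Bᴴ * B) := by
    rw [hb, sub_mul, Matrix.mul_sub, one_mul, mul_one, h1]
  have h2t : (Btᴴ * Bt) * At = At * (Btᴴ * Bt) := by
    rw [hbt, sub_mul, Matrix.mul_sub, one_mul, mul_one, h1t]
  set X := A ⊗ₖ At with hXdef
  -- `X` commutes with `K * K`
  have hc1 : X * ((Aᴴ * A) ⊗ₖ (Atᴴ * At)) = ((Aᴴ * A) ⊗ₖ (Atᴴ * At)) * X := by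
    rw [hXdef, ← Matrix.mul_kronecker_mul, ← Matrix.mul_kronecker_mul, h1, h1t]
  have hc2 : X * ((Bᴴ * B) ⊗ₖ (Btᴴ * Bt)) = ((Bᴴ * B) ⊗ₖ (Btᴴ * Bt)) * X := by
    rw [hXdef, ← Matrix.mul_kronecker_mul, ← Matrix.mul_kronecker_mul, h2, h2t]
  have hXcomm2 : X * (K * K) = (K * K) * X := by
    rw [hK2, Matrix.mul_add, Matrix.add_mul, hc1, hc2]
  have hXK : X * K = K * X := commute_of_commute_sq_s15 hK1 hXcomm2
  -- `B ⊗ Bt` is a unit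
  have hBdet : IsUnit B.det := (Matrix.isUnit_iff_isUnit_det B).mp hB
  have hBtdet : IsUnit Bt.det := (Matrix.isUnit_iff_isUnit_det Bt).mp hBt
  have hBkron : IsUnit (B ⊗ₖ Bt) := by
    refine (Matrix.isUnit_iff_isUnit_det _).mpr ?_
    rw [Matrix.det_kronecker]
    exact (hBdet.pow _).mul (hBtdet.pow _)
  -- `K * K` is positive definite, hence `K` is a unit
  have hKKpd : (K * K).PosDef := by
    rw [hK2]
    have p1 : ((Aᴴ * A) ⊗ₖ (Atᴴ * At)).PosSemidef := by
      have e : (Aᴴ * A) ⊗ₖ (Atᴴ * At) = (A ⊗ₖ At)ᴴ * (A ⊗ₖ At) := by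
        rw [kron_conjTranspose, ← Matrix.mul_kronecker_mul]
      rw [e]
      exact Matrix.posSemidef_conjTranspose_mul_self _
    have p2 : ((Bᴴ * B) ⊗ₖ (Btᴴ * Bt)).PosDef := by
      have e : (Bᴴ * B) ⊗ₖ (Btᴴ * Bt) = (B ⊗ₖ Bt)ᴴ * (B ⊗ₖ Bt) := by
        rw [kron_conjTranspose, ← Matrix.mul_kronecker_mul]
      rw [e]
      exact posDef_conjTranspose_mul_self_of_isUnit hBkron
    exact Matrix.PosDef.posSemidef_add p1 p2
  have hd : IsUnit K.det := by
    have hdd := (Matrix.isUnit_iff_isUnit_det _).mp hKKpd.isUnit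
    rw [Matrix.det_mul] at hdd
    exact isUnit_of_mul_isUnit_left hdd
  have hKinv : K⁻¹ * K = 1 := Matrix.nonsing_inv_mul K hd
  have hKinv' : K * K⁻¹ = 1 := Matrix.mul_nonsing_inv K hd
  have hKinvUnit : IsUnit K⁻¹ := by
    refine (Matrix.isUnit_iff_isUnit_det _).mpr ?_
    rw [Matrix.det_nonsing_inv]
    exact isUnit_ringInverse.mpr hd
  -- commutation with `K⁻¹`
  have hXKinv : X * K⁻¹ = K⁻¹ * X := by
    calc X * K⁻¹ = (K⁻¹ * K) * (X * K⁻¹) := by rw [hKinv, one_mul]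
      _ = K⁻¹ * (K * X) * K⁻¹ := by noncomm_ring
      _ = K⁻¹ * (X * K) * K⁻¹ := by rw [← hXK]
      _ = K⁻¹ * X * (K * K⁻¹) := by noncomm_ring
      _ = K⁻¹ * X := by rw [hKinv', mul_one]
  have hXHK : Xᴴ * K = K * Xᴴ := by
    have := congrArg Matrix.conjTranspose hXK
    rw [Matrix.conjTranspose_mul, Matrix.conjTranspose_mul, hK1.1.eq] at this
    exact this.symm
  have hXHKinv : Xᴴ * K⁻¹ = K⁻¹ * Xᴴ := by
    calc Xᴴ * K⁻¹ = (K⁻¹ * K) * (Xᴴ * K⁻¹) := by rw [hKinv, one_mul]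
      _ = K⁻¹ * (K * Xᴴ) * K⁻¹ := by noncomm_ring
      _ = K⁻¹ * (Xᴴ * K) * K⁻¹ := by rw [← hXHK]
      _ = K⁻¹ * Xᴴ * (K * K⁻¹) := by noncomm_ring
      _ = K⁻¹ * Xᴴ := by rw [hKinv', mul_one]
  have hKinvH : (K⁻¹)ᴴ = K⁻¹ := by
    rw [Matrix.conjTranspose_nonsing_inv, hK1.1.eq]
  have hXnormal : Xᴴ * X = X * Xᴴ := by
    rw [hXdef, kron_conjTranspose, ← Matrix.mul_kronecker_mul, ← Matrix.mul_kronecker_mul,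
      hA, hAt]
  constructor
  · calc (X * K⁻¹)ᴴ * (X * K⁻¹)
        = K⁻¹ * Xᴴ * (X * K⁻¹) := by rw [Matrix.conjTranspose_mul, hKinvH]
      _ = K⁻¹ * (Xᴴ * X) * K⁻¹ := by noncomm_ring
      _ = K⁻¹ * (X * Xᴴ) * K⁻¹ := by rw [hXnormal]
      _ = (K⁻¹ * X) * (Xᴴ * K⁻¹) := by noncomm_ring
      _ = (X * K⁻¹) * (K⁻¹ * Xᴴ) := by rw [← hXKinv, hXHKinv]
      _ = (X * K⁻¹) * (X * K⁻¹)ᴴ := by rw [Matrix.conjTranspose_mul, hKinvH]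
  · exact hBkron.mul hKinvUnit
end

section
/- Consider the one-dimensional P-modules (a,b,ℂ) with a,b ∈ ℂ, |a|²+|b|²=1, a ≠ 0 ≠ b. The operation (a,b) ⊠ (ã,b̃) := (aã/k, bb̃/k) with k = √(|a|²|ã|² + |b|²|b̃|²) makes this set an abelian group with identity (1/√2, 1/√2) and inverse (a,b)⁻¹ = (|b|e^{−i·Arg(a)}, |a|e^{−i·Arg(b)}). -/
/-- The set of one-dimensional irreducible diffuse P-modules:
pairs `(a,b) ∈ ℂ²` with `|a|² + |b|² = 1` and `a ≠ 0 ≠ b`. -/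
def IrrD (z : ℂ × ℂ) : Prop := ‖z.1‖ ^ 2 + ‖z.2‖ ^ 2 = 1 ∧ z.1 ≠ 0 ∧ z.2 ≠ 0

/-- The tensor product `(a,b) ⊠ (ã,b̃) = (aã/k, bb̃/k)` with
`k = √(|a|²|ã|² + |b|²|b̃|²)`. -/
noncomputable def bop (z w : ℂ × ℂ) : ℂ × ℂ :=
  (z.1 * w.1 / (Real.sqrt (‖z.1‖ ^ 2 * ‖w.1‖ ^ 2 + ‖z.2‖ ^ 2 * ‖w.2‖ ^ 2) : ℝ),
   z.2 * w.2 / (Real.sqrt (‖z.1‖ ^ 2 * ‖w.1‖ ^ 2 + ‖z.2‖ ^ 2 * ‖w.2‖ ^ 2) : ℝ))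

/-- The inverse `(a,b)⁻¹ = (|b| e^{-i Arg a}, |a| e^{-i Arg b})`
(written via `e^{-i Arg a} = conj a / |a|`). -/
noncomputable def binv (z : ℂ × ℂ) : ℂ × ℂ :=
  ((‖z.2‖ : ℂ) * (starRingEnd ℂ z.1) / (‖z.1‖ : ℂ),
   (‖z.1‖ : ℂ) * (starRingEnd ℂ z.2) / (‖z.2‖ : ℂ))

private lemma Spos {a b c d : ℂ} (ha : a ≠ 0) (hc : c ≠ 0) :
    0 < ‖a‖ ^ 2 * ‖c‖ ^ 2 + ‖b‖ ^ 2 * ‖d‖ ^ 2 := by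
  have h1 : 0 < ‖a‖ ^ 2 * ‖c‖ ^ 2 :=
    mul_pos (pow_pos (norm_pos_iff.mpr ha) 2) (pow_pos (norm_pos_iff.mpr hc) 2)
  have h2 : 0 ≤ ‖b‖ ^ 2 * ‖d‖ ^ 2 := by positivity
  linarith

private lemma normA (x y : ℂ) {r : ℝ} (hr : 0 < r) :
    ‖x * y / ((Real.sqrt r : ℝ) : ℂ)‖ ^ 2 = ‖x‖ ^ 2 * ‖y‖ ^ 2 / r := by
  rw [norm_div, norm_mul, Complex.norm_real, Real.norm_eq_abs,
    abs_of_nonneg (Real.sqrt_nonneg r), div_pow, mul_pow, Real.sq_sqrt hr.le]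

private lemma bclosure {z w : ℂ × ℂ} (hz : IrrD z) (hw : IrrD w) : IrrD (bop z w) := by
  obtain ⟨_, ha, hb⟩ := hz
  obtain ⟨_, hc, hd⟩ := hw
  have hS : 0 < ‖z.1‖ ^ 2 * ‖w.1‖ ^ 2 + ‖z.2‖ ^ 2 * ‖w.2‖ ^ 2 := Spos ha hc
  have hk : ((Real.sqrt (‖z.1‖ ^ 2 * ‖w.1‖ ^ 2 + ‖z.2‖ ^ 2 * ‖w.2‖ ^ 2) : ℝ) : ℂ) ≠ 0 :=
    Complex.ofReal_ne_zero.mpr (Real.sqrt_pos.mpr hS).ne'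
  refine ⟨?_, div_ne_zero (mul_ne_zero ha hc) hk, div_ne_zero (mul_ne_zero hb hd) hk⟩
  show ‖z.1 * w.1 / _‖ ^ 2 + ‖z.2 * w.2 / _‖ ^ 2 = 1
  rw [normA _ _ hS, normA _ _ hS, ← add_div, div_self hS.ne']

private lemma bassoc {z w u : ℂ × ℂ} (hz : IrrD z) (hw : IrrD w) (hu : IrrD u) :
    bop (bop z w) u = bop z (bop w u) := by
  obtain ⟨_, ha, hb⟩ := hz
  obtain ⟨_, hc, hd⟩ := hw
  obtain ⟨_, he, hf⟩ := hu
  have hS1 : 0 < ‖z.1‖ ^ 2 * ‖w.1‖ ^ 2 + ‖z.2‖ ^ 2 * ‖w.2‖ ^ 2 := Spos ha hc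
  have hS3 : 0 < ‖w.1‖ ^ 2 * ‖u.1‖ ^ 2 + ‖w.2‖ ^ 2 * ‖u.2‖ ^ 2 := Spos hc he
  have hT : 0 < ‖z.1‖ ^ 2 * ‖w.1‖ ^ 2 * ‖u.1‖ ^ 2 + ‖z.2‖ ^ 2 * ‖w.2‖ ^ 2 * ‖u.2‖ ^ 2 := by
    have h1 : 0 < ‖z.1‖ ^ 2 * ‖w.1‖ ^ 2 * ‖u.1‖ ^ 2 :=
      mul_pos (mul_pos (pow_pos (norm_pos_iff.mpr ha) 2) (pow_pos (norm_pos_iff.mpr hc) 2))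
        (pow_pos (norm_pos_iff.mpr he) 2)
    have h2 : 0 ≤ ‖z.2‖ ^ 2 * ‖w.2‖ ^ 2 * ‖u.2‖ ^ 2 := by positivity
    linarith
  set T : ℝ := ‖z.1‖ ^ 2 * ‖w.1‖ ^ 2 * ‖u.1‖ ^ 2 + ‖z.2‖ ^ 2 * ‖w.2‖ ^ 2 * ‖u.2‖ ^ 2 with hTdef
  have hk1 : Real.sqrt (‖z.1‖ ^ 2 * ‖w.1‖ ^ 2 + ‖z.2‖ ^ 2 * ‖w.2‖ ^ 2) ≠ 0 :=
    (Real.sqrt_pos.mpr hS1).ne'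
  have hk3 : Real.sqrt (‖w.1‖ ^ 2 * ‖u.1‖ ^ 2 + ‖w.2‖ ^ 2 * ‖u.2‖ ^ 2) ≠ 0 :=
    (Real.sqrt_pos.mpr hS3).ne'
  have hkT : Real.sqrt T ≠ 0 := (Real.sqrt_pos.mpr hT).ne'
  have hL : ‖(bop z w).1‖ ^ 2 * ‖u.1‖ ^ 2 + ‖(bop z w).2‖ ^ 2 * ‖u.2‖ ^ 2 =
      T / (‖z.1‖ ^ 2 * ‖w.1‖ ^ 2 + ‖z.2‖ ^ 2 * ‖w.2‖ ^ 2) := by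
    show ‖z.1 * w.1 / _‖ ^ 2 * ‖u.1‖ ^ 2 + ‖z.2 * w.2 / _‖ ^ 2 * ‖u.2‖ ^ 2 = _
    rw [normA _ _ hS1, normA _ _ hS1, hTdef]
    ring
  have hR : ‖z.1‖ ^ 2 * ‖(bop w u).1‖ ^ 2 + ‖z.2‖ ^ 2 * ‖(bop w u).2‖ ^ 2 =
      T / (‖w.1‖ ^ 2 * ‖u.1‖ ^ 2 + ‖w.2‖ ^ 2 * ‖u.2‖ ^ 2) := by
    show ‖z.1‖ ^ 2 * ‖w.1 * u.1 / _‖ ^ 2 + ‖z.2‖ ^ 2 * ‖w.2 * u.2 / _‖ ^ 2 = _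
    rw [normA _ _ hS3, normA _ _ hS3, hTdef]
    ring
  show (_, _) = (_, _)
  rw [hL, hR, Real.sqrt_div hT.le, Real.sqrt_div hT.le]
  show ((bop z w).1 * u.1 / _, (bop z w).2 * u.2 / _) =
       (z.1 * (bop w u).1 / _, z.2 * (bop w u).2 / _)
  show (z.1 * w.1 / _ * u.1 / _, z.2 * w.2 / _ * u.2 / _) =
       (z.1 * (w.1 * u.1 / _) / _, z.2 * (w.2 * u.2 / _) / _)
  have e1 : ∀ x y v : ℂ, ∀ p q : ℝ, p ≠ 0 → q ≠ 0 →
      x * y / (p : ℂ) * v / ((Real.sqrt T / p : ℝ) : ℂ) =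
      x * (y * v / (q : ℂ)) / ((Real.sqrt T / q : ℝ) : ℂ) := by
    intro x y v p q hp hq
    push_cast
    have hp' : (p : ℂ) ≠ 0 := Complex.ofReal_ne_zero.mpr hp
    have hq' : (q : ℂ) ≠ 0 := Complex.ofReal_ne_zero.mpr hq
    have hT' : ((Real.sqrt T : ℝ) : ℂ) ≠ 0 := Complex.ofReal_ne_zero.mpr hkT
    field_simp
  exact Prod.ext (e1 _ _ _ _ _ hk1 hk3) (e1 _ _ _ _ _ hk1 hk3)

private lemma bcomm (z w : ℂ × ℂ) : bop z w = bop w z := by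
  unfold bop
  rw [mul_comm z.1 w.1, mul_comm z.2 w.2,
    mul_comm (‖w.1‖ ^ 2) (‖z.1‖ ^ 2), mul_comm (‖w.2‖ ^ 2) (‖z.2‖ ^ 2)]

private lemma e_norm : ‖(((1 / Real.sqrt 2 : ℝ) : ℂ))‖ ^ 2 = 1 / 2 := by
  rw [Complex.norm_real, Real.norm_eq_abs, abs_of_nonneg (by positivity), div_pow, one_pow,
    Real.sq_sqrt (by norm_num : (0:ℝ) ≤ 2)]

private lemma e_irr : IrrD (((1 / Real.sqrt 2 : ℝ) : ℂ), ((1 / Real.sqrt 2 : ℝ) : ℂ)) := by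
  have h2 : Real.sqrt 2 ≠ 0 := by positivity
  refine ⟨?_, ?_, ?_⟩
  · show ‖(((1 / Real.sqrt 2 : ℝ) : ℂ))‖ ^ 2 + ‖(((1 / Real.sqrt 2 : ℝ) : ℂ))‖ ^ 2 = 1
    rw [e_norm]; norm_num
  all_goals
    exact Complex.ofReal_ne_zero.mpr (by positivity)

private lemma bident {z : ℂ × ℂ} (hz : IrrD z) :
    bop z (((1 / Real.sqrt 2 : ℝ) : ℂ), ((1 / Real.sqrt 2 : ℝ) : ℂ)) = z := by
  obtain ⟨h1, ha, hb⟩ := hz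
  have hS : ‖z.1‖ ^ 2 * ‖(((1 / Real.sqrt 2 : ℝ) : ℂ))‖ ^ 2 +
      ‖z.2‖ ^ 2 * ‖(((1 / Real.sqrt 2 : ℝ) : ℂ))‖ ^ 2 = 1 / 2 := by
    rw [e_norm]; nlinarith
  unfold bop
  rw [hS]
  have : Real.sqrt (1 / 2) = 1 / Real.sqrt 2 := by
    rw [one_div, one_div, Real.sqrt_inv]
  rw [this]
  have hne : (((1 / Real.sqrt 2 : ℝ) : ℂ)) ≠ 0 :=
    Complex.ofReal_ne_zero.mpr (by positivity)
  exact Prod.ext (by field_simp) (by field_simp)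

private lemma binv_norm1 {z : ℂ × ℂ} (hz : IrrD z) : ‖(binv z).1‖ = ‖z.2‖ := by
  obtain ⟨_, ha, hb⟩ := hz
  show ‖(‖z.2‖ : ℂ) * (starRingEnd ℂ z.1) / (‖z.1‖ : ℂ)‖ = ‖z.2‖
  rw [norm_div, norm_mul, Complex.norm_real, Complex.norm_real, RCLike.norm_conj,
    Real.norm_eq_abs, Real.norm_eq_abs, abs_of_nonneg (norm_nonneg _),
    abs_of_nonneg (norm_nonneg _),
    mul_div_assoc, div_self (norm_ne_zero_iff.mpr ha), mul_one]

private lemma binv_norm2 {z : ℂ × ℂ} (hz : IrrD z) : ‖(binv z).2‖ = ‖z.1‖ := by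
  obtain ⟨_, ha, hb⟩ := hz
  show ‖(‖z.1‖ : ℂ) * (starRingEnd ℂ z.2) / (‖z.2‖ : ℂ)‖ = ‖z.1‖
  rw [norm_div, norm_mul, Complex.norm_real, Complex.norm_real, RCLike.norm_conj,
    Real.norm_eq_abs, Real.norm_eq_abs, abs_of_nonneg (norm_nonneg _),
    abs_of_nonneg (norm_nonneg _),
    mul_div_assoc, div_self (norm_ne_zero_iff.mpr hb), mul_one]

private lemma binv_irr {z : ℂ × ℂ} (hz : IrrD z) : IrrD (binv z) := by
  obtain ⟨h1, ha, hb⟩ := hz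
  refine ⟨?_, ?_, ?_⟩
  · rw [binv_norm1 ⟨h1, ha, hb⟩, binv_norm2 ⟨h1, ha, hb⟩]; linarith
  · exact div_ne_zero (mul_ne_zero (Complex.ofReal_ne_zero.mpr (norm_ne_zero_iff.mpr hb))
      ((map_ne_zero _).mpr ha)) (Complex.ofReal_ne_zero.mpr (norm_ne_zero_iff.mpr ha))
  · exact div_ne_zero (mul_ne_zero (Complex.ofReal_ne_zero.mpr (norm_ne_zero_iff.mpr ha))
      ((map_ne_zero _).mpr hb)) (Complex.ofReal_ne_zero.mpr (norm_ne_zero_iff.mpr hb))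

private lemma binv_mul {z : ℂ × ℂ} (hz : IrrD z) :
    bop z (binv z) = (((1 / Real.sqrt 2 : ℝ) : ℂ), ((1 / Real.sqrt 2 : ℝ) : ℂ)) := by
  obtain ⟨h1, ha, hb⟩ := hz
  have hA : 0 < ‖z.1‖ := norm_pos_iff.mpr ha
  have hB : 0 < ‖z.2‖ := norm_pos_iff.mpr hb
  have hS : ‖z.1‖ ^ 2 * ‖(binv z).1‖ ^ 2 + ‖z.2‖ ^ 2 * ‖(binv z).2‖ ^ 2 =
      2 * (‖z.1‖ * ‖z.2‖) ^ 2 := by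
    rw [binv_norm1 ⟨h1, ha, hb⟩, binv_norm2 ⟨h1, ha, hb⟩]; ring
  have hsqrt : Real.sqrt (2 * (‖z.1‖ * ‖z.2‖) ^ 2) = Real.sqrt 2 * (‖z.1‖ * ‖z.2‖) := by
    rw [Real.sqrt_mul (by norm_num : (0:ℝ) ≤ 2),
      Real.sqrt_sq (by positivity)]
  show (z.1 * (binv z).1 / _, z.2 * (binv z).2 / _) = _
  rw [hS, hsqrt]
  have hA' : ((‖z.1‖ : ℝ) : ℂ) ≠ 0 := Complex.ofReal_ne_zero.mpr hA.ne'
  have hB' : ((‖z.2‖ : ℝ) : ℂ) ≠ 0 := Complex.ofReal_ne_zero.mpr hB.ne'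
  have h2 : ((Real.sqrt 2 : ℝ) : ℂ) ≠ 0 := Complex.ofReal_ne_zero.mpr (by positivity)
  refine Prod.ext ?_ ?_
  · show z.1 * ((‖z.2‖ : ℂ) * (starRingEnd ℂ z.1) / (‖z.1‖ : ℂ)) /
        ((Real.sqrt 2 * (‖z.1‖ * ‖z.2‖) : ℝ) : ℂ) = _
    have hc : z.1 * (starRingEnd ℂ z.1) = ((‖z.1‖ : ℝ) : ℂ) ^ 2 := Complex.mul_conj' z.1
    have hr : ‖z.2‖ * ‖z.1‖ ^ 2 / ‖z.1‖ / (Real.sqrt 2 * (‖z.1‖ * ‖z.2‖)) =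
        1 / Real.sqrt 2 := by
      have hA0 : ‖z.1‖ ≠ 0 := norm_ne_zero_iff.mpr ha
      have hB0 : ‖z.2‖ ≠ 0 := norm_ne_zero_iff.mpr hb
      have h2' : Real.sqrt 2 ≠ 0 := by positivity
      field_simp [hA0, hB0, h2']
    calc z.1 * ((‖z.2‖ : ℂ) * (starRingEnd ℂ z.1) / (‖z.1‖ : ℂ)) /
          ((Real.sqrt 2 * (‖z.1‖ * ‖z.2‖) : ℝ) : ℂ)
        = (‖z.2‖ : ℂ) * (z.1 * (starRingEnd ℂ z.1)) / (‖z.1‖ : ℂ) /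
          ((Real.sqrt 2 * (‖z.1‖ * ‖z.2‖) : ℝ) : ℂ) := by ring
      _ = (‖z.2‖ : ℂ) * ((‖z.1‖ : ℝ) : ℂ) ^ 2 / (‖z.1‖ : ℂ) /
          ((Real.sqrt 2 * (‖z.1‖ * ‖z.2‖) : ℝ) : ℂ) := by rw [hc]
      _ = ((‖z.2‖ * ‖z.1‖ ^ 2 / ‖z.1‖ / (Real.sqrt 2 * (‖z.1‖ * ‖z.2‖)) : ℝ) : ℂ) := by
          push_cast; ring
      _ = _ := by rw [hr]
  · show z.2 * ((‖z.1‖ : ℂ) * (starRingEnd ℂ z.2) / (‖z.2‖ : ℂ)) /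
        ((Real.sqrt 2 * (‖z.1‖ * ‖z.2‖) : ℝ) : ℂ) = _
    have hc : z.2 * (starRingEnd ℂ z.2) = ((‖z.2‖ : ℝ) : ℂ) ^ 2 := Complex.mul_conj' z.2
    have hr : ‖z.1‖ * ‖z.2‖ ^ 2 / ‖z.2‖ / (Real.sqrt 2 * (‖z.1‖ * ‖z.2‖)) =
        1 / Real.sqrt 2 := by
      have hA0 : ‖z.1‖ ≠ 0 := norm_ne_zero_iff.mpr ha
      have hB0 : ‖z.2‖ ≠ 0 := norm_ne_zero_iff.mpr hb
      have h2' : Real.sqrt 2 ≠ 0 := by positivity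
      field_simp [hA0, hB0, h2']
    calc z.2 * ((‖z.1‖ : ℂ) * (starRingEnd ℂ z.2) / (‖z.2‖ : ℂ)) /
          ((Real.sqrt 2 * (‖z.1‖ * ‖z.2‖) : ℝ) : ℂ)
        = (‖z.1‖ : ℂ) * (z.2 * (starRingEnd ℂ z.2)) / (‖z.2‖ : ℂ) /
          ((Real.sqrt 2 * (‖z.1‖ * ‖z.2‖) : ℝ) : ℂ) := by ring
      _ = (‖z.1‖ : ℂ) * ((‖z.2‖ : ℝ) : ℂ) ^ 2 / (‖z.2‖ : ℂ) /
          ((Real.sqrt 2 * (‖z.1‖ * ‖z.2‖) : ℝ) : ℂ) := by rw [hc]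
      _ = ((‖z.1‖ * ‖z.2‖ ^ 2 / ‖z.2‖ / (Real.sqrt 2 * (‖z.1‖ * ‖z.2‖)) : ℝ) : ℂ) := by
          push_cast; ring
      _ = _ := by rw [hr]

/-- `Irr_diff(1)` with `⊠` is an abelian group with identity `(1/√2, 1/√2)`
and inverse `(a,b)⁻¹ = (|b|e^{-i Arg a}, |a|e^{-i Arg b})`. -/
theorem stmt_18 :
    (∀ z w, IrrD z → IrrD w → IrrD (bop z w)) ∧
    (∀ z w u, IrrD z → IrrD w → IrrD u → bop (bop z w) u = bop z (bop w u)) ∧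
    (∀ z w, IrrD z → IrrD w → bop z w = bop w z) ∧
    IrrD (((1 / Real.sqrt 2 : ℝ) : ℂ), ((1 / Real.sqrt 2 : ℝ) : ℂ)) ∧
    (∀ z, IrrD z →
      bop z (((1 / Real.sqrt 2 : ℝ) : ℂ), ((1 / Real.sqrt 2 : ℝ) : ℂ)) = z) ∧
    (∀ z, IrrD z → IrrD (binv z) ∧
      bop z (binv z) = (((1 / Real.sqrt 2 : ℝ) : ℂ), ((1 / Real.sqrt 2 : ℝ) : ℂ))) :=
  ⟨fun _ _ => bclosure, fun _ _ _ => bassoc, fun z w _ _ => bcomm z w, e_irr,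
   fun _ => bident, fun _ hz => ⟨binv_irr hz, binv_mul hz⟩⟩
end

section
/- The map S¹ × S¹ × ℝ → Irr_diff(1), (u,v,t) ↦ (u/√(eᵗ+1), v·√(eᵗ/(eᵗ+1))), is a group isomorphism from the direct product group S¹ × S¹ × (ℝ,+) onto (Irr_diff(1), ⊠). -/
/-- The map `(u,v,t) ↦ (u/√(eᵗ+1), v·√(eᵗ/(eᵗ+1)))`. -/
noncomputable def phi (x : Circle × Circle × ℝ) : ℂ × ℂ :=
  ((x.1 : ℂ) / (Real.sqrt (Real.exp x.2.2 + 1) : ℝ),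
   (x.2.1 : ℂ) * (Real.sqrt (Real.exp x.2.2 / (Real.exp x.2.2 + 1)) : ℝ))

lemma aux_normsq1 (u : Circle) (t : ℝ) :
    ‖((u : ℂ) / (Real.sqrt (Real.exp t + 1) : ℝ))‖ ^ 2 = 1 / (Real.exp t + 1) := by
  have h : (0:ℝ) < Real.exp t + 1 := by positivity
  rw [norm_div, Complex.norm_real, Real.norm_eq_abs, abs_of_nonneg (Real.sqrt_nonneg _),
    div_pow, Real.sq_sqrt h.le]
  simp [Circle.norm_coe]

lemma aux_normsq2 (v : Circle) (t : ℝ) :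
    ‖((v : ℂ) * (Real.sqrt (Real.exp t / (Real.exp t + 1)) : ℝ))‖ ^ 2
      = Real.exp t / (Real.exp t + 1) := by
  have h : (0:ℝ) ≤ Real.exp t / (Real.exp t + 1) := by positivity
  rw [norm_mul, Complex.norm_real, Real.norm_eq_abs, abs_of_nonneg (Real.sqrt_nonneg _),
    mul_pow, Real.sq_sqrt h]
  simp [Circle.norm_coe]

/-- The map `S¹ × S¹ × ℝ → Irr_diff(1)`, `(u,v,t) ↦ (u/√(eᵗ+1), v√(eᵗ/(eᵗ+1)))`,
is a group isomorphism from `S¹ × S¹ × (ℝ,+)` onto `(Irr_diff(1), ⊠)`: it lands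
in `Irr_diff(1)`, is injective, surjective onto `Irr_diff(1)`, and multiplicative. -/
theorem stmt_19 :
    (∀ x : Circle × Circle × ℝ, IrrD (phi x)) ∧
    Function.Injective phi ∧
    (∀ z : ℂ × ℂ, IrrD z → ∃ x : Circle × Circle × ℝ, phi x = z) ∧
    (∀ u u' v v' : Circle, ∀ t t' : ℝ,
      phi (u * u', v * v', t + t') = bop (phi (u, v, t)) (phi (u', v', t'))) := by
  refine ⟨?_, ?_, ?_, ?_⟩
  · rintro ⟨u, v, t⟩
    have h : (0:ℝ) < Real.exp t + 1 := by positivity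
    refine ⟨?_, ?_, ?_⟩
    · show ‖((u : ℂ) / _)‖ ^ 2 + ‖((v : ℂ) * _)‖ ^ 2 = 1
      rw [aux_normsq1, aux_normsq2]
      field_simp
      ring
    · show (u : ℂ) / _ ≠ 0
      exact div_ne_zero u.coe_ne_zero (Complex.ofReal_ne_zero.2 (by positivity))
    · show (v : ℂ) * _ ≠ 0
      exact mul_ne_zero v.coe_ne_zero (Complex.ofReal_ne_zero.2 (by positivity))
  · rintro ⟨u, v, t⟩ ⟨u', v', t'⟩ h
    have h1 := congrArg Prod.fst h
    have h2 := congrArg Prod.snd h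
    simp only [phi] at h1 h2
    have ht : t = t' := by
      have := congrArg (fun z : ℂ => ‖z‖ ^ 2) h1
      rw [aux_normsq1, aux_normsq1] at this
      have h0 : (0:ℝ) < Real.exp t + 1 := by positivity
      have h0' : (0:ℝ) < Real.exp t' + 1 := by positivity
      field_simp at this
      exact Real.exp_injective (by linarith [this])
    subst ht
    have hs : ((Real.sqrt (Real.exp t + 1) : ℝ) : ℂ) ≠ 0 :=
      Complex.ofReal_ne_zero.2 (by positivity)
    have hs2 : ((Real.sqrt (Real.exp t / (Real.exp t + 1)) : ℝ) : ℂ) ≠ 0 :=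
      Complex.ofReal_ne_zero.2 (by positivity)
    have hu : u = u' := by field_simp at h1; exact Circle.ext h1
    have hv : v = v' := by field_simp at h2; exact Circle.ext h2
    simp [hu, hv]
  · rintro ⟨a, b⟩ ⟨hsum, ha, hb⟩
    have hra : (0:ℝ) < ‖a‖ := norm_pos_iff.2 ha
    have hrb : (0:ℝ) < ‖b‖ := norm_pos_iff.2 hb
    have hsum' : ‖a‖ ^ 2 + ‖b‖ ^ 2 = 1 := hsum
    set t : ℝ := Real.log (‖b‖ ^ 2 / ‖a‖ ^ 2) with ht
    have he : Real.exp t = ‖b‖ ^ 2 / ‖a‖ ^ 2 := Real.exp_log (by positivity)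
    have he1 : Real.exp t + 1 = 1 / ‖a‖ ^ 2 := by
      have ha2 : (‖a‖:ℝ) ^ 2 ≠ 0 := pow_ne_zero 2 hra.ne'
      rw [he, div_add' _ _ _ ha2]
      congr 1
      linarith [hsum']
    have hu : (a / (‖a‖ : ℂ)) ∈ Metric.sphere (0:ℂ) 1 := by
      rw [mem_sphere_zero_iff_norm, norm_div, Complex.norm_real, Real.norm_eq_abs,
        abs_of_pos hra, div_self hra.ne']
    have hv : (b / (‖b‖ : ℂ)) ∈ Metric.sphere (0:ℂ) 1 := by
      rw [mem_sphere_zero_iff_norm, norm_div, Complex.norm_real, Real.norm_eq_abs,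
        abs_of_pos hrb, div_self hrb.ne']
    refine ⟨⟨⟨_, hu⟩, ⟨_, hv⟩, t⟩, ?_⟩
    have hsq1 : Real.sqrt (Real.exp t + 1) = 1 / ‖a‖ := by
      rw [he1, show (1:ℝ) / ‖a‖ ^ 2 = (1 / ‖a‖) ^ 2 by rw [div_pow, one_pow]]
      exact Real.sqrt_sq (by positivity)
    have he2 : Real.exp t / (Real.exp t + 1) = ‖b‖ ^ 2 := by
      rw [he1, he, div_div_eq_mul_div, div_mul_eq_mul_div, div_one,
        mul_div_assoc, div_self (pow_ne_zero 2 hra.ne'), mul_one]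
    have hsq2 : Real.sqrt (Real.exp t / (Real.exp t + 1)) = ‖b‖ := by
      rw [he2]; exact Real.sqrt_sq hrb.le
    simp only [phi, hsq1, hsq2]
    refine Prod.ext ?_ ?_
    · show (a / (‖a‖ : ℂ)) / (((1 / ‖a‖ : ℝ)) : ℂ) = a
      have hca : ((‖a‖ : ℝ) : ℂ) ≠ 0 := Complex.ofReal_ne_zero.2 hra.ne'
      push_cast
      field_simp
    · show (b / (‖b‖ : ℂ)) * ((‖b‖ : ℝ) : ℂ) = b
      have hcb : ((‖b‖ : ℝ) : ℂ) ≠ 0 := Complex.ofReal_ne_zero.2 hrb.ne'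
      field_simp
  · intro u u' v v' t t'
    set e := Real.exp t with hedef
    set e' := Real.exp t' with he'def
    have he : 0 < e := Real.exp_pos t
    have he' : 0 < e' := Real.exp_pos t'
    have h1 : 0 < e + 1 := by linarith
    have h1' : 0 < e' + 1 := by linarith
    have h3 : 0 < e * e' + 1 := by positivity
    have hexp : Real.exp (t + t') = e * e' := Real.exp_add t t'
    simp only [phi, bop, aux_normsq1, aux_normsq2, hexp]
    have hkey : Real.sqrt (1 / (e + 1) * (1 / (e' + 1)) + e / (e + 1) * (e' / (e' + 1)))
        = Real.sqrt (e * e' + 1) / (Real.sqrt (e + 1) * Real.sqrt (e' + 1)) := by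
      rw [show 1 / (e + 1) * (1 / (e' + 1)) + e / (e + 1) * (e' / (e' + 1))
            = (e * e' + 1) / ((e + 1) * (e' + 1)) by field_simp; ring]
      rw [Real.sqrt_div h3.le, Real.sqrt_mul h1.le]
    rw [hkey]
    rw [← hedef, ← he'def]
    have s1 : ((Real.sqrt (e + 1) : ℝ) : ℂ) ≠ 0 := Complex.ofReal_ne_zero.2 (by positivity)
    have s2 : ((Real.sqrt (e' + 1) : ℝ) : ℂ) ≠ 0 := Complex.ofReal_ne_zero.2 (by positivity)
    have s3 : ((Real.sqrt (e * e' + 1) : ℝ) : ℂ) ≠ 0 := Complex.ofReal_ne_zero.2 (by positivity)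
    refine Prod.ext ?_ ?_
    · show ((u * u' : Circle) : ℂ) / _ = _
      push_cast
      field_simp
    · show ((v * v' : Circle) : ℂ) * _ = _
      rw [Real.sqrt_div he.le, Real.sqrt_div he'.le,
        show e * e' / (e * e' + 1) = e * e' * (1 / (e * e' + 1)) by ring,
        Real.sqrt_mul (by positivity),
        show (1:ℝ) / (e * e' + 1) = (e * e' + 1)⁻¹ by rw [one_div],
        Real.sqrt_inv, Real.sqrt_mul he.le]
      push_cast
      field_simp
end
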